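/- arXiv:1701.05791 — 8 statements merged into one kernel-verified Lean document; each statement's English description precedes it below -/
import Mathlib

section
/- For every linear order T there is a 2-coloring of the unordered pairs of T admitting no 0-homogeneous suborder of order type ω and no 1-homogeneous suborder of order type ω* (the reverse of ω); that is, τ ↛ (ω, ω*)² for every linear order type τ. -/
/-- For every linear order `T` there is a 2-coloring of the unordered pairs
of `T` admitting no 0-homogeneous suborder of order type `ω` and no 1-homogeneous
suborder of order type `ω*`; that is, `τ ↛ (ω, ω*)²` for every linear order type `τ`. -/
theorem stmt0 (T : Type*) [LinearOrder T] :
    ∃ f : T → T → Fin 2,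
      (¬ ∃ S : Set T, Nonempty (ℕ ≃o S) ∧ ∀ a ∈ S, ∀ b ∈ S, a < b → f a b = 0) ∧
      (¬ ∃ S : Set T, Nonempty (ℕᵒᵈ ≃o S) ∧ ∀ a ∈ S, ∀ b ∈ S, a < b → f a b = 1) := by
  classical
  let r : T → T → Prop := WellOrderingRel
  have hwo : IsWellOrder T r := WellOrderingRel.isWellOrder
  have hwf : WellFounded r := hwo.wf
  have hnodesc : ∀ g : ℕ → T, ¬ ∀ n, r (g (n + 1)) (g n) := by
    intro g hg
    have := RelEmbedding.wellFounded_iff_isEmpty.1 hwf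
    exact this.false (RelEmbedding.natGT g hg)
  refine ⟨fun a b => if r a b then 1 else 0, ?_, ?_⟩
  · rintro ⟨S, ⟨e⟩, hS⟩
    apply hnodesc (fun n => (e n : T))
    intro n
    have hlt : (e n : T) < e (n + 1) := e.strictMono (Nat.lt_succ_self n)
    have h0 := hS _ (e n).2 _ (e (n + 1)).2 hlt
    simp only [ite_eq_right_iff] at h0
    by_contra hnr
    rcases (by have := hwo.trichotomous (e n : T) (e (n + 1) : T); tauto : r (e n : T) (e (n + 1) : T) ∨ (e n : T) = (e (n + 1) : T) ∨ r (e (n + 1) : T) (e n : T)) with h | h | h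
    · exact absurd (h0 h) (by decide)
    · exact absurd h hlt.ne
    · exact hnr h
  · rintro ⟨S, ⟨e⟩, hS⟩
    apply hnodesc (fun n => (e (OrderDual.toDual n) : T))
    intro n
    have hlt : (e (OrderDual.toDual (n + 1)) : T) < e (OrderDual.toDual n) := by
      apply e.strictMono
      exact (Nat.lt_succ_self n : (n : ℕ) < n + 1)
    have h1 := hS _ (e (OrderDual.toDual (n + 1))).2 _ (e (OrderDual.toDual n)).2 hlt
    simp only [ite_eq_left_iff] at h1
    by_contra hnr
    exact absurd (h1 hnr) (by decide)
end

section
/- Suppose ν is an infinite cardinal, κ = ν⁺, and φ is a κ-scattered linear order type. Then φ is (ℵ₀, κ)-scattered, i.e., every linear order of type φ is the union of fewer than κ scattered suborders. -/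
open Cardinal

universe u

/-- A suborder (subset with the induced order) is `κ`-dense if it has more than one
element and every open interval `(a,b)` with `a < b` has at least `κ` elements. -/
def KDense (κ : Cardinal.{u}) (P : Type u) [LinearOrder P] : Prop :=
  Nontrivial P ∧ ∀ a b : P, a < b → κ ≤ #{c : P // a < c ∧ c < b}

/-- A linear order is `κ`-scattered if it has no `κ`-dense suborder. -/
def KScattered (κ : Cardinal.{u}) (P : Type u) [LinearOrder P] : Prop :=
  ∀ S : Set P, ¬ KDense κ S

section Aux

variable {α : Type u} [LinearOrder α] {ν κ : Cardinal.{u}}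

/-- Set-level density predicate. -/
def Dns (κ : Cardinal.{u}) (S : Set α) : Prop :=
  S.Nontrivial ∧ ∀ a ∈ S, ∀ b ∈ S, a < b → κ ≤ #{c : α // c ∈ S ∧ a < c ∧ c < b}

/-- Set-level scatteredness. -/
def ScatS (S : Set α) : Prop := ∀ T ⊆ S, ¬ Dns ℵ₀ T

/-- `S` is a union of at most `ν` scattered sets. -/
def UScat (ν : Cardinal.{u}) (S : Set α) : Prop :=
  ∃ (ι : Type u) (f : ι → Set α), #ι ≤ ν ∧ (∀ i, ScatS (f i)) ∧ S ⊆ ⋃ i, f i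

lemma scatS_mono {S T : Set α} (h : T ⊆ S) (hS : ScatS S) : ScatS T :=
  fun T' hT' => hS T' (hT'.trans h)

lemma scatS_of_subsingleton {S : Set α} (h : S.Subsingleton) : ScatS S :=
  fun T hT hD => (hD.1.not_subsingleton) (h.anti hT)

lemma uScat_mono {S T : Set α} (h : T ⊆ S) (hS : UScat ν S) : UScat ν T := by
  obtain ⟨ι, f, h1, h2, h3⟩ := hS
  exact ⟨ι, f, h1, h2, h.trans h3⟩

lemma uScat_of_scatS (hν : ℵ₀ ≤ ν) {S : Set α} (h : ScatS S) : UScat ν S := by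
  refine ⟨PUnit, fun _ => S, ?_, fun _ => h, ?_⟩
  · rw [mk_punit]; exact le_trans one_le_aleph0 hν
  · intro x hx; exact Set.mem_iUnion.mpr ⟨PUnit.unit, hx⟩

lemma uScat_iUnion (hν : ℵ₀ ≤ ν) {J : Type u} (hJ : #J ≤ ν) {s : J → Set α}
    (h : ∀ j, UScat ν (s j)) : UScat ν (⋃ j, s j) := by
  choose ι f hcard hscat hcov using h
  refine ⟨Σ j, ι j, fun p => f p.1 p.2, ?_, fun p => hscat p.1 p.2, ?_⟩
  · calc #(Σ j, ι j) = Cardinal.sum (fun j => #(ι j)) := mk_sigma _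
      _ ≤ Cardinal.sum (fun _ : J => ν) := Cardinal.sum_le_sum _ _ hcard
      _ = #J * ν := Cardinal.sum_const' _ _
      _ ≤ ν * ν := mul_le_mul_left hJ ν
      _ = ν := mul_eq_self hν
  · intro x hx
    obtain ⟨j, hxj⟩ := Set.mem_iUnion.mp hx
    obtain ⟨i, hi⟩ := Set.mem_iUnion.mp (hcov j hxj)
    exact Set.mem_iUnion.mpr ⟨⟨j, i⟩, hi⟩

lemma uScat_union (hν : ℵ₀ ≤ ν) {S T : Set α} (hS : UScat ν S) (hT : UScat ν T) :
    UScat ν (S ∪ T) := by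
  obtain ⟨ι₁, f₁, h1, h2, h3⟩ := hS
  obtain ⟨ι₂, g₁, g2, g3, g4⟩ := hT
  refine ⟨ι₁ ⊕ ι₂, Sum.elim f₁ g₁, ?_, ?_, ?_⟩
  · rw [mk_sum, lift_id, lift_id]
    calc #ι₁ + #ι₂ ≤ ν + ν := add_le_add h1 g2
      _ = ν := add_eq_self hν
  · rintro (i | i)
    exacts [h2 i, g3 i]
  · rintro x (hx | hx)
    · obtain ⟨i, hi⟩ := Set.mem_iUnion.mp (h3 hx)
      exact Set.mem_iUnion.mpr ⟨Sum.inl i, hi⟩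
    · obtain ⟨i, hi⟩ := Set.mem_iUnion.mp (g4 hx)
      exact Set.mem_iUnion.mpr ⟨Sum.inr i, hi⟩

/-- canonical reindexing of a `UScat` witness by `ν.out`. -/
lemma uScat_can {S : Set α} (hUS : UScat ν S) :
    ∃ f : ν.out → Set α, (∀ i, ScatS (f i)) ∧ S ⊆ ⋃ i, f i := by
  classical
  obtain ⟨ι, f, hcard, hscat, hcov⟩ := hUS
  rw [← mk_out ν] at hcard
  obtain ⟨e⟩ := Cardinal.le_def _ _ |>.mp hcard
  refine ⟨Function.extend e f (fun _ => (∅ : Set α)), ?_, ?_⟩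
  · intro j
    rw [Function.extend_def]
    split
    · exact hscat _
    · exact scatS_of_subsingleton Set.subsingleton_empty
  · intro x hx
    obtain ⟨i, hi⟩ := Set.mem_iUnion.mp (hcov hx)
    refine Set.mem_iUnion.mpr ⟨e i, ?_⟩
    rw [e.injective.extend_apply]
    exact hi

lemma kdense_iff (S : Set α) : KDense κ ↥S ↔ Dns κ S := by
  constructor
  · rintro ⟨hnt, h⟩
    refine ⟨Set.nontrivial_coe_sort.mp hnt, ?_⟩
    intro a ha b hb hab
    have h2 := h ⟨a, ha⟩ ⟨b, hb⟩ (Subtype.mk_lt_mk.mpr hab)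
    refine le_trans h2 (Cardinal.mk_le_of_injective
      (f := fun c => ⟨c.1.1, c.1.2, Subtype.coe_lt_coe.mpr c.2.1, Subtype.coe_lt_coe.mpr c.2.2⟩) ?_)
    intro c d hcd
    have h3 := congrArg Subtype.val hcd
    exact Subtype.ext (Subtype.ext h3)
  · rintro ⟨hnt, h⟩
    refine ⟨Set.nontrivial_coe_sort.mpr hnt, ?_⟩
    intro a b hab
    have h2 := h a a.2 b b.2 (Subtype.coe_lt_coe.mpr hab)
    refine le_trans h2 (Cardinal.mk_le_of_injective
      (f := fun c => ⟨⟨c.1, c.2.1⟩, Subtype.coe_lt_coe.mp c.2.2.1, Subtype.coe_lt_coe.mp c.2.2.2⟩) ?_)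
    intro c d hcd
    exact Subtype.ext (congrArg (Subtype.val ∘ Subtype.val) hcd)

lemma dns_image {S : Set α} {T : Set ↥S} (h : Dns κ T) : Dns κ ((↑) '' T : Set α) := by
  obtain ⟨hnt, hint⟩ := h
  constructor
  · obtain ⟨x, hx, y, hy, hxy⟩ := hnt
    exact ⟨x, ⟨x, hx, rfl⟩, y, ⟨y, hy, rfl⟩, Subtype.coe_injective.ne hxy⟩
  · rintro a ⟨a', ha', rfl⟩ b ⟨b', hb', rfl⟩ hab
    have h2 := hint a' ha' b' hb' (Subtype.coe_lt_coe.mp hab)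
    refine le_trans h2 (Cardinal.mk_le_of_injective
      (f := fun c => ⟨c.1.1, ⟨c.1, c.2.1, rfl⟩,
        Subtype.coe_lt_coe.mpr c.2.2.1, Subtype.coe_lt_coe.mpr c.2.2.2⟩) ?_)
    intro c d hcd
    have h3 := congrArg Subtype.val hcd
    exact Subtype.ext (Subtype.ext h3)

lemma kScattered_of_scatS {S : Set α} (h : ScatS S) : KScattered ℵ₀ ↥S := by
  intro T hT
  have h1 : Dns ℵ₀ T := (kdense_iff T).mp hT
  refine h ((↑) '' T) ?_ (dns_image h1)
  rintro x ⟨x', _, rfl⟩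
  exact x'.2

/-- From density, build a strictly decreasing sequence. -/
lemma scatS_of_no_desc {W : Set α}
    (h : ∀ f : ℕ → α, (∀ n, f n ∈ W) → ¬ ∀ n, f (n + 1) < f n) : ScatS W := by
  classical
  intro T hTW hD
  obtain ⟨⟨x, hx, y, hy, hxy⟩, hint⟩ := hD
  -- get a < b in T
  obtain ⟨a, ha, b, hb, hab⟩ : ∃ a ∈ T, ∃ b ∈ T, a < b := by
    rcases hxy.lt_or_gt with h' | h'
    exacts [⟨x, hx, y, hy, h'⟩, ⟨y, hy, x, hx, h'⟩]
  have key : ∀ z, z ∈ T → a < z → ∃ w, w ∈ T ∧ a < w ∧ w < z := by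
    intro z hz haz
    have h0 := hint a ha z hz haz
    have hne : Nonempty {c : α // c ∈ T ∧ a < c ∧ c < z} := by
      rw [← Cardinal.mk_ne_zero_iff]
      intro h1
      rw [h1] at h0
      exact Cardinal.aleph0_ne_zero (le_antisymm (le_of_le_of_eq h0 rfl) zero_le) |>.elim
    obtain ⟨⟨c, hc⟩⟩ := hne
    exact ⟨c, hc⟩
  let F : ℕ → {z : α // z ∈ T ∧ a < z} :=
    Nat.rec ⟨b, hb, hab⟩ (fun _ p =>
      ⟨(key p.1 p.2.1 p.2.2).choose, (key p.1 p.2.1 p.2.2).choose_spec.1,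
        (key p.1 p.2.1 p.2.2).choose_spec.2.1⟩)
  have hdec : ∀ n, (F (n + 1)).1 < (F n).1 := fun n =>
    (key (F n).1 (F n).2.1 (F n).2.2).choose_spec.2.2
  exact h (fun n => (F n).1) (fun n => hTW (F n).2.1) hdec

/-- From density, build a strictly increasing sequence. -/
lemma scatS_of_no_asc {W : Set α}
    (h : ∀ f : ℕ → α, (∀ n, f n ∈ W) → ¬ ∀ n, f n < f (n + 1)) : ScatS W := by
  classical
  intro T hTW hD
  obtain ⟨⟨x, hx, y, hy, hxy⟩, hint⟩ := hD
  obtain ⟨a, ha, b, hb, hab⟩ : ∃ a ∈ T, ∃ b ∈ T, a < b := by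
    rcases hxy.lt_or_gt with h' | h'
    exacts [⟨x, hx, y, hy, h'⟩, ⟨y, hy, x, hx, h'⟩]
  have key : ∀ z, z ∈ T → z < b → ∃ w, w ∈ T ∧ z < w ∧ w < b := by
    intro z hz hzb
    have h0 := hint z hz b hb hzb
    have hne : Nonempty {c : α // c ∈ T ∧ z < c ∧ c < b} := by
      rw [← Cardinal.mk_ne_zero_iff]
      intro h1
      rw [h1] at h0
      exact Cardinal.aleph0_ne_zero (le_antisymm (le_of_le_of_eq h0 rfl) zero_le) |>.elim
    obtain ⟨⟨c, hc⟩⟩ := hne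
    exact ⟨c, hc⟩
  let F : ℕ → {z : α // z ∈ T ∧ z < b} :=
    Nat.rec ⟨a, ha, hab⟩ (fun _ p =>
      ⟨(key p.1 p.2.1 p.2.2).choose, (key p.1 p.2.1 p.2.2).choose_spec.1,
        (key p.1 p.2.1 p.2.2).choose_spec.2.2⟩)
  have hinc : ∀ n, (F n).1 < (F (n + 1)).1 := fun n =>
    (key (F n).1 (F n).2.1 (F n).2.2).choose_spec.2.1
  exact h (fun n => (F n).1) (fun n => hTW (F n).2.1) hinc


/-- Lemma A: a monotone map to a scattered base with `UScat` fibers gives `UScat`. -/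
lemma lemA (hν : ℵ₀ ≤ ν) {S B : Set α} (g : α → α) (hB : ScatS B)
    (hgB : ∀ x ∈ S, g x ∈ B)
    (hmono : ∀ x ∈ S, ∀ y ∈ S, x ≤ y → g x ≤ g y)
    (hfib : ∀ b, UScat ν {x | x ∈ S ∧ g x = b}) : UScat ν S := by
  classical
  choose cov hcovS hcovU using fun b => uScat_can (hfib b)
  refine ⟨ν.out, fun ζ => {x | x ∈ S ∧ x ∈ cov (g x) ζ}, (mk_out ν).le, ?_, ?_⟩
  · intro ζ T hT hD
    by_cases hcase : ∃ a ∈ T, ∃ b ∈ T, a < b ∧ g a = g b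
    · obtain ⟨a, ha, b, hb, hab, hg⟩ := hcase
      have hsub : T ∩ Set.Icc a b ⊆ cov (g a) ζ := by
        rintro x ⟨hxT, hxI⟩
        have hx := hT hxT
        have hgx : g x = g a := by
          refine le_antisymm ?_ (hmono a (hT ha).1 x hx.1 hxI.1)
          rw [hg]
          exact hmono x hx.1 b (hT hb).1 hxI.2
        rw [← hgx]
        exact hx.2
      refine hcovS (g a) ζ (T ∩ Set.Icc a b) hsub ⟨?_, ?_⟩
      · exact ⟨a, ⟨ha, le_rfl, hab.le⟩, b, ⟨hb, hab.le, le_rfl⟩, hab.ne⟩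
      · rintro u ⟨huT, huI⟩ v ⟨hvT, hvI⟩ huv
        have h2 := hD.2 u huT v hvT huv
        refine le_trans h2 (Cardinal.mk_le_of_injective
          (f := fun c => ⟨c.1, ⟨c.2.1, huI.1.trans c.2.2.1.le, c.2.2.2.le.trans hvI.2⟩, c.2.2⟩) ?_)
        intro c d hcd
        have h3 := congrArg Subtype.val hcd
        exact Subtype.ext h3
    · push_neg at hcase
      have hTS : ∀ {z}, z ∈ T → z ∈ S := fun hz => (hT hz).1
      have hstrict : ∀ a ∈ T, ∀ b ∈ T, a < b → g a < g b := fun a ha b hb h' =>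
        lt_of_le_of_ne (hmono a (hTS ha) b (hTS hb) h'.le) (hcase a ha b hb h')
      refine hB (g '' T) ?_ ⟨?_, ?_⟩
      · rintro x ⟨x', hx', rfl⟩
        exact hgB x' (hTS hx')
      · obtain ⟨x, hx, y, hy, hxy⟩ := hD.1
        rcases hxy.lt_or_gt with h' | h'
        · exact ⟨g x, ⟨x, hx, rfl⟩, g y, ⟨y, hy, rfl⟩, (hstrict x hx y hy h').ne⟩
        · exact ⟨g y, ⟨y, hy, rfl⟩, g x, ⟨x, hx, rfl⟩, (hstrict y hy x hx h').ne⟩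
      · rintro u ⟨a, ha, rfl⟩ v ⟨b, hb, rfl⟩ huv
        have hab : a < b := by
          rcases lt_trichotomy a b with h' | h' | h'
          · exact h'
          · exact absurd (h' ▸ huv) (lt_irrefl _)
          · exact absurd (hstrict b hb a ha h') (lt_asymm huv)
        have h2 := hD.2 a ha b hb hab
        refine le_trans h2 (Cardinal.mk_le_of_injective
          (f := fun c => ⟨g c.1, ⟨c.1, c.2.1, rfl⟩, hstrict a ha c.1 c.2.1 c.2.2.1,
            hstrict c.1 c.2.1 b hb c.2.2.2⟩) ?_)
        intro c d hcd
        have h3 : g c.1 = g d.1 := congrArg Subtype.val hcd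
        refine Subtype.ext ?_
        rcases lt_trichotomy c.1 d.1 with h' | h' | h'
        · exact absurd h3 (hstrict c.1 c.2.1 d.1 d.2.1 h').ne
        · exact h'
        · exact absurd h3.symm (hstrict d.1 d.2.1 c.1 c.2.1 h').ne
  · intro x hx
    obtain ⟨ζ, hζ⟩ := Set.mem_iUnion.mp (hcovU (g x) ⟨hx, rfl⟩)
    exact Set.mem_iUnion.mpr ⟨ζ, hx, hζ⟩

/-- Lemma W: if every `Icc c x` (for `x ∈ S`) is `UScat`, and `S ⊆ Ici c`, then `S` is. -/
lemma lemW (hν : ℵ₀ ≤ ν) {S : Set α} {c : α} (hc : ∀ x ∈ S, c ≤ x)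
    (h : ∀ x ∈ S, UScat ν (Set.Icc c x)) : UScat ν S := by
  classical
  have wf : WellFounded (WellOrderingRel : α → α → Prop) := IsWellFounded.wf
  set r : α → α → Prop := WellOrderingRel with hr
  set W : Set α := {x | x ∈ S ∧ ∀ y ∈ S, r y x → y < x} with hWdef
  have hWlt : ∀ u ∈ W, ∀ v ∈ W, r u v → u < v := fun u hu v hv hruv => hv.2 u hu.1 hruv
  have cof : ∀ x ∈ S, ∃ w, w ∈ W ∧ x ≤ w := by
    intro x hx
    have hne : {y | y ∈ S ∧ x ≤ y}.Nonempty := ⟨x, hx, le_rfl⟩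
    refine ⟨wf.min _ hne, ⟨(wf.min_mem _ hne).1, ?_⟩, (wf.min_mem _ hne).2⟩
    intro y hy hry
    by_contra hlt
    push_neg at hlt
    exact wf.not_lt_min {y | y ∈ S ∧ x ≤ y} ⟨hy, le_trans (wf.min_mem _ hne).2 hlt⟩ hry
  set g : α → α := fun x =>
    if hx : {w | w ∈ W ∧ x ≤ w}.Nonempty then wf.min _ hx else x with hgdef
  have hgW : ∀ x ∈ S, g x ∈ W ∧ x ≤ g x := by
    intro x hx
    obtain ⟨w, hw, hxw⟩ := cof x hx
    have hne : {w | w ∈ W ∧ x ≤ w}.Nonempty := ⟨w, hw, hxw⟩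
    rw [hgdef]
    simp only [dif_pos hne]
    exact ⟨(wf.min_mem _ hne).1, (wf.min_mem _ hne).2⟩
  have hgmin : ∀ x ∈ S, ∀ w ∈ W, x ≤ w → ¬ r w (g x) := by
    intro x hx w hw hxw
    have hne : {w | w ∈ W ∧ x ≤ w}.Nonempty := ⟨w, hw, hxw⟩
    rw [hgdef]
    simp only [dif_pos hne]
    exact wf.not_lt_min {w | w ∈ W ∧ x ≤ w} ⟨hw, hxw⟩
  refine lemA hν g ?_ (fun x hx => (hgW x hx).1) ?_ ?_
  · refine scatS_of_no_desc ?_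
    intro f hf hdec
    have hrd : ∀ n, r (f (n + 1)) (f n) := by
      intro n
      rcases trichotomous_of r (f (n + 1)) (f n) with h' | h' | h'
      · exact h'
      · exact absurd h' (hdec n).ne
      · exact absurd (hWlt _ (hf n) _ (hf (n + 1)) h') (lt_asymm (hdec n))
    have hne : (Set.range f).Nonempty := ⟨f 0, 0, rfl⟩
    obtain ⟨n, hn⟩ := wf.min_mem _ hne
    exact wf.not_lt_min (Set.range f) ⟨n + 1, rfl⟩ (hn ▸ hrd n)
  · intro x hx y hy hxy
    obtain ⟨hgyW, hygy⟩ := hgW y hy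
    have h1 : ¬ r (g y) (g x) := hgmin x hx (g y) hgyW (hxy.trans hygy)
    rcases trichotomous_of r (g x) (g y) with h' | h' | h'
    · exact (hWlt _ (hgW x hx).1 _ hgyW h').le
    · exact h'.le
    · exact absurd h' h1
  · intro b
    by_cases hb : {x | x ∈ S ∧ g x = b}.Nonempty
    · obtain ⟨x₀, hx₀, hgx₀⟩ := hb
      have hbW : b ∈ W := hgx₀ ▸ (hgW x₀ hx₀).1
      refine uScat_mono ?_ (h b hbW.1)
      rintro x ⟨hxS, hgx⟩
      exact ⟨hc x hxS, hgx ▸ (hgW x hxS).2⟩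
    · rw [Set.not_nonempty_iff_eq_empty] at hb
      rw [hb]
      exact uScat_of_scatS hν (scatS_of_subsingleton Set.subsingleton_empty)

/-- Lemma W': dual version. -/
lemma lemW' (hν : ℵ₀ ≤ ν) {S : Set α} {c : α} (hc : ∀ x ∈ S, x ≤ c)
    (h : ∀ x ∈ S, UScat ν (Set.Icc x c)) : UScat ν S := by
  classical
  have wf : WellFounded (WellOrderingRel : α → α → Prop) := IsWellFounded.wf
  set r : α → α → Prop := WellOrderingRel with hr
  set W : Set α := {x | x ∈ S ∧ ∀ y ∈ S, r y x → x < y} with hWdef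
  have hWlt : ∀ u ∈ W, ∀ v ∈ W, r u v → v < u := fun u hu v hv hruv => hv.2 u hu.1 hruv
  have cof : ∀ x ∈ S, ∃ w, w ∈ W ∧ w ≤ x := by
    intro x hx
    have hne : {y | y ∈ S ∧ y ≤ x}.Nonempty := ⟨x, hx, le_rfl⟩
    refine ⟨wf.min _ hne, ⟨(wf.min_mem _ hne).1, ?_⟩, (wf.min_mem _ hne).2⟩
    intro y hy hry
    by_contra hlt
    push_neg at hlt
    exact wf.not_lt_min {y | y ∈ S ∧ y ≤ x} ⟨hy, le_trans hlt (wf.min_mem _ hne).2⟩ hry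
  set g : α → α := fun x =>
    if hx : {w | w ∈ W ∧ w ≤ x}.Nonempty then wf.min _ hx else x with hgdef
  have hgW : ∀ x ∈ S, g x ∈ W ∧ g x ≤ x := by
    intro x hx
    obtain ⟨w, hw, hxw⟩ := cof x hx
    have hne : {w | w ∈ W ∧ w ≤ x}.Nonempty := ⟨w, hw, hxw⟩
    rw [hgdef]
    simp only [dif_pos hne]
    exact ⟨(wf.min_mem _ hne).1, (wf.min_mem _ hne).2⟩
  have hgmin : ∀ x ∈ S, ∀ w ∈ W, w ≤ x → ¬ r w (g x) := by
    intro x hx w hw hxw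
    have hne : {w | w ∈ W ∧ w ≤ x}.Nonempty := ⟨w, hw, hxw⟩
    rw [hgdef]
    simp only [dif_pos hne]
    exact wf.not_lt_min {w | w ∈ W ∧ w ≤ x} ⟨hw, hxw⟩
  refine lemA hν g ?_ (fun x hx => (hgW x hx).1) ?_ ?_
  · refine scatS_of_no_asc ?_
    intro f hf hinc
    have hrd : ∀ n, r (f (n + 1)) (f n) := by
      intro n
      rcases trichotomous_of r (f (n + 1)) (f n) with h' | h' | h'
      · exact h'
      · exact absurd h' (hinc n).ne'
      · exact absurd (hWlt _ (hf n) _ (hf (n + 1)) h') (lt_asymm (hinc n))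
    have hne : (Set.range f).Nonempty := ⟨f 0, 0, rfl⟩
    obtain ⟨n, hn⟩ := wf.min_mem _ hne
    exact wf.not_lt_min (Set.range f) ⟨n + 1, rfl⟩ (hn ▸ hrd n)
  · intro x hx y hy hxy
    obtain ⟨hgxW, hxgx⟩ := hgW x hx
    have h1 : ¬ r (g x) (g y) := hgmin y hy (g x) hgxW (hxgx.trans hxy)
    rcases trichotomous_of r (g y) (g x) with h' | h' | h'
    · exact (hWlt _ (hgW y hy).1 _ hgxW h').le
    · exact h'.ge
    · exact absurd h' h1
  · intro b
    by_cases hb : {x | x ∈ S ∧ g x = b}.Nonempty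
    · obtain ⟨x₀, hx₀, hgx₀⟩ := hb
      have hbW : b ∈ W := hgx₀ ▸ (hgW x₀ hx₀).1
      refine uScat_mono ?_ (h b hbW.1)
      rintro x ⟨hxS, hgx⟩
      exact ⟨hgx ▸ (hgW x hxS).2, hc x hxS⟩
    · rw [Set.not_nonempty_iff_eq_empty] at hb
      rw [hb]
      exact uScat_of_scatS hν (scatS_of_subsingleton Set.subsingleton_empty)

/-- Each `~`-class (of `x ~ y ↔ UScat ν (uIcc x y)`) is itself `UScat`. -/
lemma uScat_class (hν : ℵ₀ ≤ ν) (x : α) : UScat ν {y | UScat ν (Set.uIcc x y)} := by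
  have h1 : UScat ν ({y | UScat ν (Set.uIcc x y)} ∩ Set.Ici x) := by
    refine lemW hν (c := x) (fun y hy => hy.2) ?_
    intro y hy
    rw [← Set.uIcc_of_le hy.2]
    exact hy.1
  have h2 : UScat ν ({y | UScat ν (Set.uIcc x y)} ∩ Set.Iic x) := by
    refine lemW' hν (c := x) (fun y hy => hy.2) ?_
    intro y hy
    rw [← Set.uIcc_of_ge hy.2]
    exact hy.1
  refine uScat_mono ?_ (uScat_union hν h2 h1)
  intro y hy
  rcases le_total y x with h' | h'
  · exact Or.inl ⟨hy, h'⟩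
  · exact Or.inr ⟨hy, h'⟩

end Aux

/-- Suppose `ν` is an infinite cardinal, `κ = ν⁺`, and `φ` is a `κ`-scattered
linear order type.  Then `φ` is `(ℵ₀, κ)`-scattered, i.e., every linear order of type `φ`
is the union of fewer than `κ` scattered (i.e. `ℵ₀`-scattered) suborders. -/
theorem stmt1 (ν : Cardinal.{u}) (hν : ℵ₀ ≤ ν) (κ : Cardinal.{u}) (hκ : κ = Order.succ ν)
    (P : Type u) [LinearOrder P] (hP : KScattered κ P) :
    ∃ (ι : Type u) (F : ι → Set P), #ι < κ ∧ (∀ i, KScattered ℵ₀ (F i)) ∧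
      (⋃ i, F i) = Set.univ := by
  classical
  have hDnsP : ∀ S : Set P, ¬ Dns κ S := fun S hS => hP S ((kdense_iff S).mpr hS)
  -- the equivalence relation
  have href : ∀ x : P, UScat ν (Set.uIcc x x) := by
    intro x
    rw [Set.uIcc_self]
    exact uScat_of_scatS hν (scatS_of_subsingleton Set.subsingleton_singleton)
  have hsymm : ∀ {x y : P}, UScat ν (Set.uIcc x y) → UScat ν (Set.uIcc y x) := by
    intro x y h
    rwa [Set.uIcc_comm]
  have htrans : ∀ {x y z : P},
      UScat ν (Set.uIcc x y) → UScat ν (Set.uIcc y z) → UScat ν (Set.uIcc x z) :=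
    fun h1 h2 => uScat_mono Set.uIcc_subset_uIcc_union_uIcc (uScat_union hν h1 h2)
  letI s : Setoid P := ⟨fun x y => UScat ν (Set.uIcc x y), ⟨href, hsymm, htrans⟩⟩
  by_cases hall : ∀ x y : P, UScat ν (Set.uIcc x y)
  · -- all points equivalent: cover the universe
    have huniv : UScat ν (Set.univ : Set P) := by
      rcases isEmpty_or_nonempty P with hE | hne
      · refine ⟨PUnit, fun _ => (∅ : Set P), ?_, fun _ => scatS_of_subsingleton Set.subsingleton_empty, ?_⟩
        · rw [mk_punit]; exact le_trans one_le_aleph0 hν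
        · intro x _
          exact (hE.false x).elim
      · obtain ⟨x₀⟩ := hne
        have h1 : UScat ν (Set.Ici x₀) := by
          refine lemW hν (c := x₀) (fun y hy => hy) ?_
          intro y hy
          rw [← Set.uIcc_of_le hy]
          exact hall x₀ y
        have h2 : UScat ν (Set.Iic x₀) := by
          refine lemW' hν (c := x₀) (fun y hy => hy) ?_
          intro y hy
          rw [← Set.uIcc_of_ge hy]
          exact hall x₀ y
        refine uScat_mono ?_ (uScat_union hν h2 h1)
        intro y _
        rcases le_total y x₀ with h' | h'
        · exact Or.inl h'
        · exact Or.inr h'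
    obtain ⟨f, hs, hcov⟩ := uScat_can huniv
    refine ⟨ν.out, f, ?_, fun i => kScattered_of_scatS (hs i), ?_⟩
    · rw [mk_out, hκ]
      exact Order.lt_succ ν
    · exact Set.eq_univ_of_univ_subset hcov
  · -- otherwise: we build a κ-dense suborder, contradiction
    exfalso
    push_neg at hall
    obtain ⟨x₀, y₀, hxy⟩ := hall
    set rep : P → P := fun x => (Quotient.mk s x).out with hrepdef
    have hrep_rel : ∀ x : P, UScat ν (Set.uIcc x (rep x)) :=
      fun x => hsymm (Quotient.exact (Quotient.out_eq (Quotient.mk s x)))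
    have hrep_eq : ∀ {x y : P}, UScat ν (Set.uIcc x y) → rep x = rep y :=
      fun h => congrArg Quotient.out (Quotient.sound h)
    have hrep_idem : ∀ x : P, rep (rep x) = rep x :=
      fun x => hrep_eq (hsymm (hrep_rel x))
    set R : Set P := Set.range rep with hRdef
    have hrepR : ∀ a ∈ R, rep a = a := by
      rintro a ⟨z, rfl⟩
      exact hrep_idem z
    refine hDnsP R ⟨?_, ?_⟩
    · refine ⟨rep x₀, ⟨x₀, rfl⟩, rep y₀, ⟨y₀, rfl⟩, fun h => hxy ?_⟩
      exact htrans (hrep_rel x₀) (h ▸ hsymm (hrep_rel y₀))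
    · intro a ha b hb hab
      by_contra hcard
      push_neg at hcard
      rw [hκ] at hcard
      have hcard' : #{c : P // c ∈ R ∧ a < c ∧ c < b} ≤ ν := Order.lt_succ_iff.mp hcard
      -- representatives of points of `Icc a b` stay in `Icc a b`
      have hrepIcc : ∀ x ∈ Set.Icc a b, rep x ∈ Set.Icc a b := by
        intro x hx
        constructor
        · by_contra h'
          push_neg at h'
          have hax : UScat ν (Set.uIcc a x) := by
            refine uScat_mono ?_ (hrep_rel x)
            rw [Set.uIcc_of_le hx.1, Set.uIcc_of_ge (h'.le.trans hx.1)]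
            exact Set.Icc_subset_Icc_left h'.le
          have heq : rep a = rep x := hrep_eq hax
          rw [hrepR a ha] at heq
          exact h'.ne heq.symm
        · by_contra h'
          push_neg at h'
          have hbx : UScat ν (Set.uIcc b x) := by
            refine uScat_mono ?_ (hrep_rel x)
            rw [Set.uIcc_of_ge hx.2, Set.uIcc_of_le (hx.2.trans h'.le)]
            exact Set.Icc_subset_Icc_right h'.le
          have heq : rep b = rep x := hrep_eq hbx
          rw [hrepR b hb] at heq
          exact h'.ne' heq.symm
      have hJcard : #(↥(R ∩ Set.Icc a b)) ≤ ν := by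
        have hsub : R ∩ Set.Icc a b ⊆
            insert a (insert b {c | c ∈ R ∧ a < c ∧ c < b}) := by
          rintro x ⟨hxR, hx1, hx2⟩
          rcases eq_or_lt_of_le hx1 with h1 | h1
          · exact Set.mem_insert_iff.mpr (Or.inl h1.symm)
          rcases eq_or_lt_of_le hx2 with h2 | h2
          · exact Set.mem_insert_iff.mpr (Or.inr (Set.mem_insert_iff.mpr (Or.inl h2)))
          · exact Set.mem_insert_iff.mpr (Or.inr (Set.mem_insert_iff.mpr
              (Or.inr ⟨hxR, h1, h2⟩)))
        have hν1 : ν + 1 = ν := add_one_eq hν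
        calc #(↥(R ∩ Set.Icc a b))
            ≤ #(↥(insert a (insert b {c | c ∈ R ∧ a < c ∧ c < b}))) :=
              Cardinal.mk_le_mk_of_subset hsub
          _ ≤ #(↥(insert b {c | c ∈ R ∧ a < c ∧ c < b})) + 1 := Cardinal.mk_insert_le
          _ ≤ (#{c : P // c ∈ R ∧ a < c ∧ c < b} + 1) + 1 :=
              add_le_add_left Cardinal.mk_insert_le 1
          _ ≤ (ν + 1) + 1 := by
              exact add_le_add_left (add_le_add_left hcard' 1) 1
          _ = ν := by rw [hν1, hν1]
      have hcover : UScat ν (Set.Icc a b) := by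
        have hU := uScat_iUnion hν (J := ↥(R ∩ Set.Icc a b)) hJcard
          (s := fun j => {y | UScat ν (Set.uIcc (j : P) y)})
          (fun j => uScat_class hν (j : P))
        refine uScat_mono ?_ hU
        intro x hx
        exact Set.mem_iUnion.mpr ⟨⟨rep x, ⟨x, rfl⟩, hrepIcc x hx⟩, hsymm (hrep_rel x)⟩
      have hUab : UScat ν (Set.uIcc a b) := by
        rw [Set.uIcc_of_le hab.le]
        exact hcover
      have heq := hrep_eq hUab
      rw [hrepR a ha, hrepR b hb] at heq
      exact hab.ne heq
end

section
/- Suppose μ is an infinite regular cardinal, T is a μ-saturated linear order, and P is a linear order of cardinality μ. Then there exist μ-saturated suborders T_a of T (for a ∈ P) such that the lexicographic sum Σ_{a∈P} T_a embeds into T; that is, one can choose the T_a pairwise disjoint with T_a entirely below T_b in T whenever a < b in P. -/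
open Cardinal

universe u

/-- A linear order `T` is `μ`-saturated if it is nonempty and for all subsets `A, B ⊆ T`
with `|A| < μ`, `|B| < μ`, and every element of `A` below every element of `B`,
there is `c ∈ T` with `A < c < B`. -/
def KSaturated (μ : Cardinal.{u}) (T : Type u) [LinearOrder T] : Prop :=
  Nonempty T ∧ ∀ A B : Set T, #A < μ → #B < μ → (∀ a ∈ A, ∀ b ∈ B, a < b) →
    ∃ c : T, (∀ a ∈ A, a < c) ∧ (∀ b ∈ B, c < b)


open Classical in
noncomputable def build {T : Type u} [LinearOrder T] (t0 : T)
    {W : Type u} [LinearOrder W] [WellFoundedLT W]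
    {P : Type u} [LinearOrder P] (e : W → P) : W → T :=
  (IsWellFounded.wf (α := W) (r := (· < ·))).fix fun i rec =>
    if h : ∃ c : T, ∀ j, ∀ hj : j < i,
        (e j < e i → rec j hj < c) ∧ (e i < e j → c < rec j hj)
    then h.choose else t0

open Classical in
theorem build_eq {T : Type u} [LinearOrder T] (t0 : T)
    {W : Type u} [LinearOrder W] [WellFoundedLT W]
    {P : Type u} [LinearOrder P] (e : W → P) (i : W) :
    build t0 e i =
      if h : ∃ c : T, ∀ j, ∀ _ : j < i,
          (e j < e i → build t0 e j < c) ∧ (e i < e j → c < build t0 e j)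
      then h.choose else t0 :=
  WellFounded.fix_eq _ _ i

theorem build_spec {μ : Cardinal.{u}} {T : Type u} [LinearOrder T] (t0 : T)
    (hT : KSaturated μ T)
    {W : Type u} [LinearOrder W] [WellFoundedLT W]
    {P : Type u} [LinearOrder P] (e : W → P)
    (hcard : ∀ i : W, #(Set.Iio i) < μ) :
    ∀ i j : W, j < i →
      (e j < e i → build t0 e j < build t0 e i) ∧
      (e i < e j → build t0 e i < build t0 e j) := by
  intro i
  induction i using WellFoundedLT.induction with
  | ind i IH =>
    have hex : ∃ c : T, ∀ j, ∀ _ : j < i,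
        (e j < e i → build t0 e j < c) ∧ (e i < e j → c < build t0 e j) := by
      set A : Set T := (build t0 e) '' {k | k < i ∧ e k < e i} with hA
      set B : Set T := (build t0 e) '' {k | k < i ∧ e i < e k} with hB
      have hAc : #A < μ :=
        lt_of_le_of_lt (le_trans mk_image_le
          (mk_le_mk_of_subset (fun x hx => hx.1))) (hcard i)
      have hBc : #B < μ :=
        lt_of_le_of_lt (le_trans mk_image_le
          (mk_le_mk_of_subset (fun x hx => hx.1))) (hcard i)
      have hAB : ∀ a ∈ A, ∀ b ∈ B, a < b := by
        rintro a ⟨k₁, ⟨hk₁, he₁⟩, rfl⟩ b ⟨k₂, ⟨hk₂, he₂⟩, rfl⟩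
        have h12 : e k₁ < e k₂ := he₁.trans he₂
        rcases lt_trichotomy k₁ k₂ with h | h | h
        · exact (IH k₂ hk₂ k₁ h).1 h12
        · exact absurd (h ▸ h12) (lt_irrefl _)
        · exact (IH k₁ hk₁ k₂ h).2 h12
      obtain ⟨c, hc1, hc2⟩ := hT.2 A B hAc hBc hAB
      exact ⟨c, fun k hk =>
        ⟨fun h => hc1 _ ⟨k, ⟨hk, h⟩, rfl⟩, fun h => hc2 _ ⟨k, ⟨hk, h⟩, rfl⟩⟩⟩
    intro j hj
    rw [build_eq t0 e i, dif_pos hex]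
    exact hex.choose_spec j hj

theorem ksat_Ioo {μ : Cardinal.{u}} (hμ0 : ℵ₀ ≤ μ) {T : Type u} [LinearOrder T]
    (hT : KSaturated μ T) {u v : T} (huv : u < v) :
    KSaturated μ (Set.Ioo u v) := by
  have h1μ : (1 : Cardinal) < μ := lt_of_lt_of_le one_lt_aleph0 hμ0
  constructor
  · obtain ⟨c, hc1, hc2⟩ := hT.2 {u} {v} (by simpa using h1μ) (by simpa using h1μ)
      (by rintro a rfl b rfl; exact huv)
    exact ⟨⟨c, hc1 u rfl, hc2 v rfl⟩⟩
  · intro A B hA hB hAB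
    set A' : Set T := insert u (Subtype.val '' A) with hA'
    set B' : Set T := insert v (Subtype.val '' B) with hB'
    have hAc : #A' < μ := lt_of_le_of_lt (mk_insert_le)
      (add_lt_of_lt hμ0 (lt_of_le_of_lt mk_image_le hA) h1μ)
    have hBc : #B' < μ := lt_of_le_of_lt (mk_insert_le)
      (add_lt_of_lt hμ0 (lt_of_le_of_lt mk_image_le hB) h1μ)
    have hord : ∀ a ∈ A', ∀ b ∈ B', a < b := by
      rintro a (rfl | ⟨x, hx, rfl⟩) b (rfl | ⟨y, hy, rfl⟩)
      · exact huv
      · exact y.2.1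
      · exact x.2.2
      · exact hAB x hx y hy
    obtain ⟨c, hc1, hc2⟩ := hT.2 A' B' hAc hBc hord
    refine ⟨⟨c, hc1 u (Set.mem_insert _ _), hc2 v (Set.mem_insert _ _)⟩, ?_, ?_⟩
    · exact fun a ha => hc1 a.val (Set.mem_insert_of_mem _ ⟨a, ha, rfl⟩)
    · exact fun b hb => hc2 b.val (Set.mem_insert_of_mem _ ⟨b, hb, rfl⟩)

/-- Suppose `μ` is an infinite regular cardinal, `T` is a `μ`-saturated
linear order, and `P` is a linear order of cardinality `μ`.  Then there exist
`μ`-saturated suborders `T_a` of `T` (for `a ∈ P`), with `T_a` entirely below `T_b`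
whenever `a < b` in `P` (in particular they are pairwise disjoint and the lexicographic
sum `Σ_{a∈P} T_a` embeds into `T`). -/
theorem stmt2 (μ : Cardinal.{u}) (hμ : μ.IsRegular) (T : Type u) [LinearOrder T]
    (hT : KSaturated μ T) (P : Type u) [LinearOrder P] (hP : #P = μ) :
    ∃ F : P → Set T, (∀ a : P, KSaturated μ (F a)) ∧
      (∀ a b : P, a < b → ∀ x ∈ F a, ∀ y ∈ F b, x < y) := by
  have hμ0 : ℵ₀ ≤ μ := hμ.aleph0_le
  set W := μ.ord.ToType with hW
  set P' := P ×ₗ (ULift.{u} Bool) with hP'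
  have hcardP' : #P' = μ := by
    have h1 : #P' = #(P × ULift.{u} Bool) := rfl
    rw [h1, Cardinal.mk_prod, Cardinal.lift_id, Cardinal.lift_id, hP,
      show #(ULift.{u} Bool) = 2 by simp]
    exact mul_eq_left hμ0 ((Cardinal.nat_lt_aleph0 2).le.trans hμ0) two_ne_zero
  have hcardW : #W = μ := mk_ord_toType μ
  obtain ⟨e⟩ := Cardinal.eq.mp (hcardW.trans hcardP'.symm)
  obtain ⟨t0⟩ := hT.1
  have hcard : ∀ i : W, #(Set.Iio i) < μ := fun i => mk_Iio_ord_toType i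
  have spec := build_spec t0 hT (⇑e) hcard
  set g : P' → T := fun p => build t0 (⇑e) (e.symm p) with hg
  have hmono : ∀ p q : P', p < q → g p < g q := by
    intro p q hpq
    have hne : e.symm p ≠ e.symm q := fun h => absurd (e.symm.injective.eq_iff.mp h ▸ hpq)
      (lt_irrefl _)
    have hep : e (e.symm p) < e (e.symm q) := by simpa using hpq
    rcases lt_or_gt_of_ne hne with h | h
    · exact (spec (e.symm q) (e.symm p) h).1 hep
    · exact (spec (e.symm p) (e.symm q) h).2 hep
  set lo : P → T := fun a => g (toLex (a, ⟨false⟩)) with hlo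
  set hi : P → T := fun a => g (toLex (a, ⟨true⟩)) with hhi
  have hlohi : ∀ a : P, lo a < hi a := by
    intro a
    apply hmono
    exact Prod.Lex.lt_iff.mpr (Or.inr ⟨rfl, by exact Bool.false_lt_true⟩)
  refine ⟨fun a => Set.Ioo (lo a) (hi a), fun a => ksat_Ioo hμ0 hT (hlohi a), ?_⟩
  intro a b hab x hx y hy
  have h1 : hi a < lo b := hmono _ _ (Prod.Lex.lt_iff.mpr (Or.inl hab))
  exact hx.2.trans (h1.trans hy.1)
end

section
/- Suppose μ is an infinite regular cardinal, T is a μ-saturated linear order, ν < μ is a cardinal, and T_α (α < ν) is a collection of weakly μ-scattered suborders of T. Then ⋃_{α<ν} T_α ≠ T. -/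
open Cardinal

universe u

/-- A linear order is weakly `μ`-scattered if it has no `μ`-saturated suborder. -/
def WeaklyKScattered (μ : Cardinal.{u}) (P : Type u) [LinearOrder P] : Prop :=
  ∀ S : Set P, ¬ KSaturated μ S

/-- Key step: given a weakly `μ`-scattered suborder `Fi` of `T` and sets `P, Q`,
one can pick small sets `A ⊆ Fi`, `B ⊆ Fi` lying strictly between `P` and `Q`, with
`A < B`, such that no element of `Fi` lies strictly between `P ∪ A` and `Q ∪ B`. -/
lemma step_spec {μ : Cardinal.{u}} {T : Type u} [LinearOrder T] (hμ0 : 0 < μ)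
    (Fi : Set T) (hFi : WeaklyKScattered μ Fi) (P Q : Set T) :
    ∃ AB : Set T × Set T,
      (#AB.1 < μ ∧ #AB.2 < μ) ∧
      (∀ t ∈ AB.1 ∪ AB.2, (∀ p ∈ P, p < t) ∧ (∀ q ∈ Q, t < q)) ∧
      (∀ a ∈ AB.1, ∀ b ∈ AB.2, a < b) ∧
      (∀ c ∈ Fi, (∀ p ∈ P, p < c) → (∀ q ∈ Q, c < q) →
        (∀ a ∈ AB.1, a < c) → (∀ b ∈ AB.2, c < b) → False) := by
  classical
  set S : Set Fi := {t | (∀ p ∈ P, p < (t : T)) ∧ (∀ q ∈ Q, (t : T) < q)} with hS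
  have hnot : ¬ KSaturated μ S := hFi S
  by_cases hne : Nonempty S
  · rw [KSaturated, not_and] at hnot
    have h2 := hnot hne
    push_neg at h2
    obtain ⟨A, B, hAcard, hBcard, hAB, hno⟩ := h2
    refine ⟨((fun x : S => ((x : Fi) : T)) '' A, (fun x : S => ((x : Fi) : T)) '' B),
      ⟨?_, ?_⟩, ?_, ?_, ?_⟩
    · exact (mk_image_le).trans_lt hAcard
    · exact (mk_image_le).trans_lt hBcard
    · rintro t (⟨x, hx, rfl⟩ | ⟨x, hx, rfl⟩) <;> exact x.2
    · rintro a ⟨x, hx, rfl⟩ b ⟨y, hy, rfl⟩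
      have := hAB x hx y hy
      exact_mod_cast this
    · rintro c hc hP hQ hA hB
      set c' : S := ⟨⟨c, hc⟩, hP, hQ⟩ with hc'
      have h1 : ∀ a ∈ A, a < c' := by
        intro a ha
        have := hA _ ⟨a, ha, rfl⟩
        exact_mod_cast this
      have h2 : ∀ b ∈ B, c' < b := by
        intro b hb
        have := hB _ ⟨b, hb, rfl⟩
        exact_mod_cast this
      obtain ⟨b, hb, hbc⟩ := hno c' h1
      exact absurd (h2 b hb) (not_lt.2 hbc)
  · refine ⟨(∅, ∅), ⟨by simpa using hμ0, by simpa using hμ0⟩, by simp, by simp, ?_⟩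
    rintro c hc hP hQ - -
    exact hne ⟨⟨⟨c, hc⟩, hP, hQ⟩⟩

/-- Suppose `μ` is an infinite regular cardinal, `T` is a `μ`-saturated
linear order, `ν < μ` is a cardinal, and `T_α (α < ν)` is a collection of weakly
`μ`-scattered suborders of `T`.  Then `⋃_{α<ν} T_α ≠ T`. -/
theorem stmt3 (μ : Cardinal.{u}) (hμ : μ.IsRegular) (T : Type u) [LinearOrder T]
    (hT : KSaturated μ T) (ι : Type u) (hι : #ι < μ) (F : ι → Set T)
    (hF : ∀ i, WeaklyKScattered μ (F i)) :
    (⋃ i, F i) ≠ Set.univ := by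
  classical
  intro hU
  have hμ0 : (0 : Cardinal) < μ := aleph0_pos.trans_le hμ.aleph0_le
  set r : ι → ι → Prop := WellOrderingRel with hr
  have wf : WellFounded r := (WellOrderingRel.isWellOrder).toIsWellFounded.wf
  set body : ∀ i : ι, (∀ j, r j i → Set T × Set T) → Set T × Set T :=
    fun i g => (step_spec hμ0 (F i) (hF i)
      (⋃ j, ⋃ _ : r j i, (g j ‹_›).1) (⋃ j, ⋃ _ : r j i, (g j ‹_›).2)).choose with hbody
  set G : ι → Set T × Set T := wf.fix body with hGdef
  have hGeq : ∀ i, G i = body i fun j _ => G j := fun i => wf.fix_eq body i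
  -- accumulated sets below stage i
  set P : ι → Set T := fun i => ⋃ j, ⋃ _ : r j i, (G j).1 with hP
  set Q : ι → Set T := fun i => ⋃ j, ⋃ _ : r j i, (G j).2 with hQ
  have hGspec : ∀ i,
      (#(G i).1 < μ ∧ #(G i).2 < μ) ∧
      (∀ t ∈ (G i).1 ∪ (G i).2, (∀ p ∈ P i, p < t) ∧ (∀ q ∈ Q i, t < q)) ∧
      (∀ a ∈ (G i).1, ∀ b ∈ (G i).2, a < b) ∧
      (∀ c ∈ F i, (∀ p ∈ P i, p < c) → (∀ q ∈ Q i, c < q) →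
        (∀ a ∈ (G i).1, a < c) → (∀ b ∈ (G i).2, c < b) → False) := by
    intro i
    have h := (step_spec hμ0 (F i) (hF i) (P i) (Q i)).choose_spec
    have : G i = (step_spec hμ0 (F i) (hF i) (P i) (Q i)).choose := hGeq i
    rw [this]
    exact h
  -- the two global sets
  set A : Set T := ⋃ i, (G i).1 with hA
  set B : Set T := ⋃ i, (G i).2 with hB
  have hAcard : #A < μ :=
    mk_iUnion_le_sum_mk.trans_lt (sum_lt_of_isRegular hμ hι fun i => (hGspec i).1.1)
  have hBcard : #B < μ :=
    mk_iUnion_le_sum_mk.trans_lt (sum_lt_of_isRegular hμ hι fun i => (hGspec i).1.2)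
  -- every element of A is below every element of B
  have hABlt : ∀ a ∈ A, ∀ b ∈ B, a < b := by
    rintro a ha b hb
    obtain ⟨i, ha⟩ := Set.mem_iUnion.1 ha
    obtain ⟨j, hb⟩ := Set.mem_iUnion.1 hb
    rcases trichotomous_of r i j with hij | rfl | hji
    · -- a ∈ P j, and b lies above P j
      exact ((hGspec j).2.1 b (Or.inr hb)).1 a (Set.mem_iUnion.2 ⟨i, Set.mem_iUnion.2 ⟨hij, ha⟩⟩)
    · exact (hGspec i).2.2.1 a ha b hb
    · -- b ∈ Q i, and a lies below Q i
      exact ((hGspec i).2.1 a (Or.inl ha)).2 b (Set.mem_iUnion.2 ⟨j, Set.mem_iUnion.2 ⟨hji, hb⟩⟩)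
  obtain ⟨c, hcA, hcB⟩ := hT.2 A B hAcard hBcard hABlt
  have hc : c ∈ ⋃ i, F i := hU ▸ Set.mem_univ c
  obtain ⟨i, hci⟩ := Set.mem_iUnion.1 hc
  refine (hGspec i).2.2.2 c hci ?_ ?_ ?_ ?_
  · intro p hp
    obtain ⟨j, hj⟩ := Set.mem_iUnion.1 hp
    obtain ⟨-, hj⟩ := Set.mem_iUnion.1 hj
    exact hcA p (Set.mem_iUnion.2 ⟨j, hj⟩)
  · intro q hq
    obtain ⟨j, hj⟩ := Set.mem_iUnion.1 hq
    obtain ⟨-, hj⟩ := Set.mem_iUnion.1 hj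
    exact hcB q (Set.mem_iUnion.2 ⟨j, hj⟩)
  · intro a ha; exact hcA a (Set.mem_iUnion.2 ⟨i, ha⟩)
  · intro b hb; exact hcB b (Set.mem_iUnion.2 ⟨i, hb⟩)
end

section
/- Suppose μ is an infinite regular cardinal, T is a μ-saturated linear order, ν < μ is a cardinal, and c : T → ν. Then there is a μ-saturated suborder T' ⊆ T such that c is constant on T'. -/
open Cardinal

universe u

noncomputable def iterPair {X : Type u} (g : Ordinal.{u} → Set X × Set X → Set X × Set X) :
    Ordinal.{u} → Set X × Set X :=
  Ordinal.lt_wf.fix fun α IH =>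
    g α (⋃ β, ⋃ h : β < α, (IH β h).1, ⋃ β, ⋃ h : β < α, (IH β h).2)

theorem iterPair_eq {X : Type u} (g : Ordinal.{u} → Set X × Set X → Set X × Set X)
    (α : Ordinal.{u}) :
    iterPair g α
      = g α (⋃ β, ⋃ _ : β < α, (iterPair g β).1, ⋃ β, ⋃ _ : β < α, (iterPair g β).2) :=
  Ordinal.lt_wf.fix_eq _ α

/-- Suppose `μ` is an infinite regular cardinal, `T` is a `μ`-saturated
linear order, `ν < μ` is a cardinal, and `c : T → ν`.  Then there is a `μ`-saturated
suborder `T' ⊆ T` on which `c` is constant. -/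
theorem stmt4 (μ : Cardinal.{u}) (hμ : μ.IsRegular) (T : Type u) [LinearOrder T]
    (hT : KSaturated μ T) (ν : Type u) (hν : #ν < μ) (c : T → ν) :
    ∃ S : Set T, KSaturated μ S ∧ ∀ x ∈ S, ∀ y ∈ S, c x = c y := by
  classical
  by_contra hcon
  push_neg at hcon
  have H : ∀ S : Set T, (∀ x ∈ S, ∀ y ∈ S, c x = c y) → ¬ KSaturated μ S := by
    intro S hS hKS
    obtain ⟨x, hx, y, hy, hxy⟩ := hcon S hKS
    exact hxy (hS x hx y hy)
  -- the one-step extension lemma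
  have step : ∀ (p : Set T × Set T) (i : ν), ∃ q : Set T × Set T,
      p.1 ⊆ q.1 ∧ p.2 ⊆ q.2 ∧
      ((#p.1 < μ ∧ #p.2 < μ ∧ ∀ a ∈ p.1, ∀ b ∈ p.2, a < b) →
        #q.1 < μ ∧ #q.2 < μ ∧ (∀ a ∈ q.1, ∀ b ∈ q.2, a < b) ∧
          ∀ x : T, (∀ a ∈ q.1, a < x) → (∀ b ∈ q.2, x < b) → c x ≠ i) := by
    intro p i
    by_cases hp : #p.1 < μ ∧ #p.2 < μ ∧ ∀ a ∈ p.1, ∀ b ∈ p.2, a < b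
    · set S' : Set T := {x | c x = i ∧ (∀ a ∈ p.1, a < x) ∧ ∀ b ∈ p.2, x < b} with hS'def
      have hconst : ∀ x ∈ S', ∀ y ∈ S', c x = c y := fun x hx y hy => hx.1.trans hy.1.symm
      have hns := H S' hconst
      rw [KSaturated] at hns
      by_cases hne : Nonempty S'
      · have h2 : ¬ ∀ A B : Set S', #A < μ → #B < μ → (∀ a ∈ A, ∀ b ∈ B, a < b) →
            ∃ z : S', (∀ a ∈ A, a < z) ∧ ∀ b ∈ B, z < b := fun h => hns ⟨hne, h⟩
        push_neg at h2
        obtain ⟨A₀, B₀, hA₀, hB₀, hAB₀, hno⟩ := h2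
        refine ⟨(p.1 ∪ Subtype.val '' A₀, p.2 ∪ Subtype.val '' B₀), ?_, ?_, fun _ => ?_⟩
        · exact Set.subset_union_left
        · show p.2 ⊆ p.2 ∪ Subtype.val '' B₀
          exact Set.subset_union_left
        have hmemA : ∀ a ∈ Subtype.val '' A₀, a ∈ S' := by
          rintro a ⟨a₀, _, rfl⟩; exact a₀.2
        have hmemB : ∀ b ∈ Subtype.val '' B₀, b ∈ S' := by
          rintro b ⟨b₀, _, rfl⟩; exact b₀.2
        refine ⟨?_, ?_, ?_, ?_⟩
        · refine (Cardinal.mk_union_le _ _).trans_lt (Cardinal.add_lt_of_lt hμ.aleph0_le hp.1 ?_)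
          rwa [Cardinal.mk_image_eq Subtype.val_injective]
        · refine (Cardinal.mk_union_le _ _).trans_lt
            (Cardinal.add_lt_of_lt hμ.aleph0_le hp.2.1 ?_)
          rwa [Cardinal.mk_image_eq Subtype.val_injective]
        · rintro a (ha | ha) b (hb | hb)
          · exact hp.2.2 a ha b hb
          · exact (hmemB b hb).2.1 a ha
          · exact (hmemA a ha).2.2 b hb
          · obtain ⟨a₀, ha₀, rfl⟩ := ha
            obtain ⟨b₀, hb₀, rfl⟩ := hb
            exact Subtype.coe_lt_coe.mpr (hAB₀ a₀ ha₀ b₀ hb₀)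
        · intro x hxa hxb hcx
          have hxS : x ∈ S' := by
            refine ⟨hcx, fun a ha => hxa a (Or.inl ha), fun b hb => hxb b (Or.inl hb)⟩
          obtain ⟨b, hb, hble⟩ := hno ⟨x, hxS⟩ (fun a ha =>
            Subtype.coe_lt_coe.mp (hxa a (Or.inr ⟨a, ha, rfl⟩)))
          exact absurd (hxb b (Or.inr ⟨b, hb, rfl⟩)) (not_lt.mpr (Subtype.coe_le_coe.mpr hble))
      · refine ⟨p, subset_rfl, subset_rfl, fun _ => ⟨hp.1, hp.2.1, hp.2.2, ?_⟩⟩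
        intro x hxa hxb hcx
        exact hne ⟨⟨x, hcx, hxa, hxb⟩⟩
    · exact ⟨p, subset_rfl, subset_rfl, fun h => absurd h hp⟩
  choose Add hAdd1 hAdd2 hAdd3 using step
  let e : ν ↪ Ordinal.{u} := embeddingToCardinal.trans ⟨Cardinal.ord, Cardinal.ord_injective⟩
  obtain ⟨F, hF⟩ : ∃ F : Ordinal.{u} → Set T × Set T, ∀ α,
      F α = if h : ∃ i, e i = α then
              Add (⋃ β, ⋃ _ : β < α, (F β).1, ⋃ β, ⋃ _ : β < α, (F β).2) h.choose
            else (⋃ β, ⋃ _ : β < α, (F β).1, ⋃ β, ⋃ _ : β < α, (F β).2) :=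
    ⟨iterPair (fun α p => if h : ∃ i, e i = α then Add p h.choose else p),
      fun α => iterPair_eq (fun α p => if h : ∃ i, e i = α then Add p h.choose else p) α⟩
  -- monotonicity
  have hgsub : ∀ α, (⋃ β, ⋃ _ : β < α, (F β).1) ⊆ (F α).1 ∧
      (⋃ β, ⋃ _ : β < α, (F β).2) ⊆ (F α).2 := by
    intro α
    rw [hF α]
    by_cases h : ∃ i, e i = α
    · rw [dif_pos h]
      exact ⟨hAdd1 (⋃ β, ⋃ _ : β < α, (F β).1, ⋃ β, ⋃ _ : β < α, (F β).2) h.choose,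
        hAdd2 (⋃ β, ⋃ _ : β < α, (F β).1, ⋃ β, ⋃ _ : β < α, (F β).2) h.choose⟩
    · rw [dif_neg h]; exact ⟨subset_rfl, subset_rfl⟩
  have hmono : ∀ β α, β ≤ α → (F β).1 ⊆ (F α).1 ∧ (F β).2 ⊆ (F α).2 := by
    intro β α hle
    rcases eq_or_lt_of_le hle with rfl | hlt
    · exact ⟨subset_rfl, subset_rfl⟩
    · exact ⟨fun x hx => (hgsub α).1 (Set.mem_iUnion₂.mpr ⟨β, hlt, hx⟩),
        fun x hx => (hgsub α).2 (Set.mem_iUnion₂.mpr ⟨β, hlt, hx⟩)⟩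
  -- structural bound: everything comes from the stages e i
  have struct : ∀ β, (F β).1 ⊆ (⋃ i : {i : ν // e i ≤ β}, (F (e i)).1) ∧
      (F β).2 ⊆ ⋃ i : {i : ν // e i ≤ β}, (F (e i)).2 := by
    intro β
    induction β using Ordinal.induction with
    | h β IH =>
      by_cases h : ∃ i, e i = β
      · have hFe : F (e h.choose) = F β := by rw [h.choose_spec]
        constructor
        · intro x hx
          exact Set.mem_iUnion.mpr ⟨⟨h.choose, h.choose_spec.le⟩, by rw [hFe]; exact hx⟩
        · intro x hx
          exact Set.mem_iUnion.mpr ⟨⟨h.choose, h.choose_spec.le⟩, by rw [hFe]; exact hx⟩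
      · rw [hF β, dif_neg h]
        constructor
        · intro x hx
          obtain ⟨γ, hγ, hxγ⟩ := Set.mem_iUnion₂.mp hx
          obtain ⟨⟨i, hi⟩, hxi⟩ := Set.mem_iUnion.mp ((IH γ hγ).1 hxγ)
          exact Set.mem_iUnion.mpr ⟨⟨i, hi.trans hγ.le⟩, hxi⟩
        · intro x hx
          obtain ⟨γ, hγ, hxγ⟩ := Set.mem_iUnion₂.mp hx
          obtain ⟨⟨i, hi⟩, hxi⟩ := Set.mem_iUnion.mp ((IH γ hγ).2 hxγ)
          exact Set.mem_iUnion.mpr ⟨⟨i, hi.trans hγ.le⟩, hxi⟩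
  -- the main invariant, both for the union-so-far and the stage itself
  have key : ∀ α,
      (#(⋃ β, ⋃ _ : β < α, (F β).1) < μ ∧ #(⋃ β, ⋃ _ : β < α, (F β).2) < μ ∧
        ∀ a ∈ (⋃ β, ⋃ _ : β < α, (F β).1), ∀ b ∈ (⋃ β, ⋃ _ : β < α, (F β).2), a < b) ∧
      (#(F α).1 < μ ∧ #(F α).2 < μ ∧ ∀ a ∈ (F α).1, ∀ b ∈ (F α).2, a < b) := by
    intro α
    induction α using Ordinal.induction with
    | h α IH =>
      have hU1 : #(⋃ β, ⋃ _ : β < α, (F β).1) < μ := by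
        have hsub : (⋃ β, ⋃ _ : β < α, (F β).1) ⊆
            ⋃ i : {i : ν // e i < α}, (F (e i)).1 := by
          intro x hx
          obtain ⟨γ, hγ, hxγ⟩ := Set.mem_iUnion₂.mp hx
          obtain ⟨⟨i, hi⟩, hxi⟩ := Set.mem_iUnion.mp ((struct γ).1 hxγ)
          exact Set.mem_iUnion.mpr ⟨⟨i, hi.trans_lt hγ⟩, hxi⟩
        refine (Cardinal.mk_le_mk_of_subset hsub).trans_lt
          (Cardinal.mk_iUnion_le_sum_mk.trans_lt
            (Cardinal.sum_lt_of_isRegular hμ ((Cardinal.mk_subtype_le _).trans_lt hν)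
              fun i => (IH (e i.1) i.2).2.1))
      have hU2 : #(⋃ β, ⋃ _ : β < α, (F β).2) < μ := by
        have hsub : (⋃ β, ⋃ _ : β < α, (F β).2) ⊆
            ⋃ i : {i : ν // e i < α}, (F (e i)).2 := by
          intro x hx
          obtain ⟨γ, hγ, hxγ⟩ := Set.mem_iUnion₂.mp hx
          obtain ⟨⟨i, hi⟩, hxi⟩ := Set.mem_iUnion.mp ((struct γ).2 hxγ)
          exact Set.mem_iUnion.mpr ⟨⟨i, hi.trans_lt hγ⟩, hxi⟩
        refine (Cardinal.mk_le_mk_of_subset hsub).trans_lt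
          (Cardinal.mk_iUnion_le_sum_mk.trans_lt
            (Cardinal.sum_lt_of_isRegular hμ ((Cardinal.mk_subtype_le _).trans_lt hν)
              fun i => (IH (e i.1) i.2).2.2.1))
      have hUord : ∀ a ∈ (⋃ β, ⋃ _ : β < α, (F β).1),
          ∀ b ∈ (⋃ β, ⋃ _ : β < α, (F β).2), a < b := by
        intro a ha b hb
        obtain ⟨β, hβ, haβ⟩ := Set.mem_iUnion₂.mp ha
        obtain ⟨γ, hγ, hbγ⟩ := Set.mem_iUnion₂.mp hb
        rcases le_total β γ with hle | hle
        · exact (IH γ hγ).2.2.2 a ((hmono β γ hle).1 haβ) b hbγ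
        · exact (IH β hβ).2.2.2 a haβ b ((hmono γ β hle).2 hbγ)
      refine ⟨⟨hU1, hU2, hUord⟩, ?_⟩
      rw [hF α]
      by_cases h : ∃ i, e i = α
      · rw [dif_pos h]
        obtain ⟨h1, h2, h3, _⟩ := hAdd3
          (⋃ β, ⋃ _ : β < α, (F β).1, ⋃ β, ⋃ _ : β < α, (F β).2) h.choose ⟨hU1, hU2, hUord⟩
        exact ⟨h1, h2, h3⟩
      · rw [dif_neg h]
        exact ⟨hU1, hU2, hUord⟩
  -- final contradiction
  have hAF : #(⋃ i : ν, (F (e i)).1) < μ :=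
    Cardinal.mk_iUnion_le_sum_mk.trans_lt
      (Cardinal.sum_lt_of_isRegular hμ hν fun i => (key (e i)).2.1)
  have hBF : #(⋃ i : ν, (F (e i)).2) < μ :=
    Cardinal.mk_iUnion_le_sum_mk.trans_lt
      (Cardinal.sum_lt_of_isRegular hμ hν fun i => (key (e i)).2.2.1)
  have hord : ∀ a ∈ (⋃ i : ν, (F (e i)).1), ∀ b ∈ (⋃ i : ν, (F (e i)).2), a < b := by
    intro a ha b hb
    obtain ⟨i, hai⟩ := Set.mem_iUnion.mp ha
    obtain ⟨j, hbj⟩ := Set.mem_iUnion.mp hb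
    rcases le_total (e i) (e j) with h | h
    · exact (key (e j)).2.2.2 a ((hmono _ _ h).1 hai) b hbj
    · exact (key (e i)).2.2.2 a hai b ((hmono _ _ h).2 hbj)
  obtain ⟨x, hxA, hxB⟩ := hT.2 _ _ hAF hBF hord
  have hex : ∃ j, e j = e (c x) := ⟨c x, rfl⟩
  have hchoose : hex.choose = c x := e.injective hex.choose_spec
  have hFei := hF (e (c x))
  rw [dif_pos hex] at hFei
  have havoid := (hAdd3
    (⋃ β, ⋃ _ : β < e (c x), (F β).1, ⋃ β, ⋃ _ : β < e (c x), (F β).2)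
    hex.choose (key (e (c x))).1).2.2.2
  rw [← hFei] at havoid
  exact havoid x (fun a ha => hxA a (Set.mem_iUnion.mpr ⟨c x, ha⟩))
    (fun b hb => hxB b (Set.mem_iUnion.mpr ⟨c x, hb⟩)) hchoose.symm
end

section
/- Suppose κ is a strongly inaccessible cardinal. Then there is a κ-scattered linear order that is not (ℵ₀, κ)-scattered. -/
open Cardinal

universe u

open Set Ordinal

lemma two_lt_aleph0' : (2 : Cardinal.{u}) < ℵ₀ := by
  exact_mod_cast Cardinal.nat_lt_aleph0 2

section Aux

variable {L : Type u} [LinearOrder L]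

/-- If every element of `V` has few elements of `V` above it, then `V` is small
(provided there are no long decreasing chains, which follows from the density set `E`). -/
lemma fin_bound_up (θ : Cardinal.{u}) (hθ : ℵ₀ ≤ θ) (E S V : Set L) (hE : #E ≤ θ)
    (dens : ∀ a ∈ S, ∀ b ∈ S, a < b → ∃ d ∈ E, a < d ∧ d ≤ b)
    (hVS : V ⊆ S) (h1 : ∀ v ∈ V, #(V ∩ Set.Ioi v : Set L) ≤ θ) : #V ≤ θ := by
  classical
  have wf : WellFounded (WellOrderingRel (α := L)) := WellOrderingRel.isWellOrder.wf
  set r : L → L → Prop := WellOrderingRel with hr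
  set C : Set L := {v | v ∈ V ∧ ∀ w ∈ V, r w v → v < w} with hCdef
  have hCV : C ⊆ V := fun c hc => hc.1
  have coinit : ∀ s ∈ V, ∃ c ∈ C, c ≤ s := by
    intro s hs
    have hA : {w | w ∈ V ∧ w ≤ s}.Nonempty := ⟨s, hs, le_rfl⟩
    refine ⟨wf.min _ hA, ⟨(wf.min_mem _ hA).1, ?_⟩, (wf.min_mem _ hA).2⟩
    intro w hw hrw
    by_contra hlt
    push_neg at hlt
    exact wf.not_lt_min {w | w ∈ V ∧ w ≤ s} ⟨hw, hlt.trans (wf.min_mem _ hA).2⟩ hrw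
  have hC : #C ≤ θ := by
    set C1 : Set L := {c | c ∈ C ∧ ∃ w ∈ C, w < c} with hC1def
    have key : ∀ c ∈ C1, ∃ d ∈ E, d ≤ c ∧ ∀ w ∈ C, w < c → w < d := by
      intro c hc
      obtain ⟨hcC, w0, hw0C, hw0⟩ := hc
      have hB : {w | w ∈ C ∧ w < c}.Nonempty := ⟨w0, hw0C, hw0⟩
      have hmC : wf.min _ hB ∈ C := (wf.min_mem _ hB).1
      have hmc : wf.min _ hB < c := (wf.min_mem _ hB).2
      have hmax : ∀ w ∈ C, w < c → w ≤ wf.min _ hB := by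
        intro w hw hwc
        rcases eq_or_ne w (wf.min _ hB) with h | hne
        · exact le_of_eq h
        · have hnr : ¬ r w (wf.min _ hB) := wf.not_lt_min {w | w ∈ C ∧ w < c} ⟨hw, hwc⟩
          rcases trichotomous_of r w (wf.min _ hB) with h | h | h
          · exact absurd h hnr
          · exact absurd h hne
          · exact le_of_lt (hw.2 _ (hCV hmC) h)
      obtain ⟨d, hdE, hmd, hdc⟩ :=
        dens _ (hVS (hCV hmC)) c (hVS (hCV hcC)) hmc
      exact ⟨d, hdE, hdc, fun w hw hwc => lt_of_le_of_lt (hmax w hw hwc) hmd⟩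
    have hC1 : #C1 ≤ θ := by
      refine le_trans ?_ hE
      choose f hfE hfle hfgt using fun c : ↥C1 => key c c.2
      refine Cardinal.mk_le_of_injective (f := fun c => (⟨f c, hfE c⟩ : ↥E)) ?_
      intro c c' hcc
      have hval : f c = f c' := congrArg Subtype.val hcc
      by_contra hne
      have hne' : (c : L) ≠ (c' : L) := fun h => hne (Subtype.ext h)
      rcases hne'.lt_or_gt with h | h
      · exact absurd hval (ne_of_lt (lt_of_le_of_lt (hfle c) (hfgt c' _ c.2.1 h)))
      · exact absurd hval.symm (ne_of_lt (lt_of_le_of_lt (hfle c') (hfgt c _ c'.2.1 h)))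
    set C0 : Set L := {x | x ∈ C ∧ ∀ w ∈ C, x ≤ w} with hC0def
    have hC0 : #C0 ≤ 1 := by
      rw [Cardinal.mk_le_one_iff_set_subsingleton]
      intro x hx y hy
      exact le_antisymm (hx.2 y hy.1) (hy.2 x hx.1)
    have hsub : C ⊆ C1 ∪ C0 := by
      intro c hc
      by_cases h : ∃ w ∈ C, w < c
      · exact Or.inl ⟨hc, h⟩
      · push_neg at h
        exact Or.inr ⟨hc, h⟩
    calc #C ≤ #(C1 ∪ C0 : Set L) := Cardinal.mk_le_mk_of_subset hsub
      _ ≤ #C1 + #C0 := Cardinal.mk_union_le _ _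
      _ ≤ θ + 1 := add_le_add hC1 hC0
      _ ≤ θ + θ := add_le_add_right (le_trans (le_of_lt Cardinal.one_lt_aleph0) hθ) _
      _ = θ := Cardinal.add_eq_self hθ
  have hcov : V ⊆ ⋃ c ∈ C, (V ∩ Set.Ici c) := by
    intro s hs
    obtain ⟨c, hcC, hcs⟩ := coinit s hs
    exact Set.mem_biUnion hcC ⟨hs, hcs⟩
  have hIci : ∀ c : L, c ∈ C → #(V ∩ Set.Ici c : Set L) ≤ θ := by
    intro c hc
    have hsub : (V ∩ Set.Ici c : Set L) ⊆ insert c (V ∩ Set.Ioi c : Set L) := by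
      rintro x ⟨hxV, hxc⟩
      rcases eq_or_lt_of_le hxc with h | h
      · exact Or.inl h.symm
      · exact Or.inr ⟨hxV, h⟩
    calc #(V ∩ Set.Ici c : Set L) ≤ #(insert c (V ∩ Set.Ioi c) : Set L) :=
          Cardinal.mk_le_mk_of_subset hsub
      _ ≤ #(V ∩ Set.Ioi c : Set L) + 1 := Cardinal.mk_insert_le
      _ ≤ θ + θ := add_le_add (h1 c (hCV hc))
          (le_trans (le_of_lt Cardinal.one_lt_aleph0) hθ)
      _ = θ := Cardinal.add_eq_self hθ
  calc #V ≤ #(⋃ c ∈ C, (V ∩ Set.Ici c) : Set L) := Cardinal.mk_le_mk_of_subset hcov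
    _ ≤ #C * ⨆ c : ↥C, #(V ∩ Set.Ici (c : L) : Set L) := Cardinal.mk_biUnion_le _ _
    _ ≤ θ * θ := mul_le_mul' hC (ciSup_le' fun c => hIci _ c.2)
    _ = θ := Cardinal.mul_eq_self hθ

/-- Dual version. -/
lemma fin_bound_down (θ : Cardinal.{u}) (hθ : ℵ₀ ≤ θ) (E S V : Set L) (hE : #E ≤ θ)
    (dens : ∀ a ∈ S, ∀ b ∈ S, a < b → ∃ d ∈ E, a ≤ d ∧ d < b)
    (hVS : V ⊆ S) (h1 : ∀ v ∈ V, #(V ∩ Set.Iio v : Set L) ≤ θ) : #V ≤ θ := by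
  classical
  have wf : WellFounded (WellOrderingRel (α := L)) := WellOrderingRel.isWellOrder.wf
  set r : L → L → Prop := WellOrderingRel with hr
  set C : Set L := {v | v ∈ V ∧ ∀ w ∈ V, r w v → w < v} with hCdef
  have hCV : C ⊆ V := fun c hc => hc.1
  have cofin : ∀ s ∈ V, ∃ c ∈ C, s ≤ c := by
    intro s hs
    have hA : {w | w ∈ V ∧ s ≤ w}.Nonempty := ⟨s, hs, le_rfl⟩
    refine ⟨wf.min _ hA, ⟨(wf.min_mem _ hA).1, ?_⟩, (wf.min_mem _ hA).2⟩
    intro w hw hrw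
    by_contra hlt
    push_neg at hlt
    exact wf.not_lt_min {w | w ∈ V ∧ s ≤ w} ⟨hw, (wf.min_mem _ hA).2.trans hlt⟩ hrw
  have hC : #C ≤ θ := by
    set C1 : Set L := {c | c ∈ C ∧ ∃ w ∈ C, c < w} with hC1def
    have key : ∀ c ∈ C1, ∃ d ∈ E, c ≤ d ∧ ∀ w ∈ C, c < w → d < w := by
      intro c hc
      obtain ⟨hcC, w0, hw0C, hw0⟩ := hc
      have hB : {w | w ∈ C ∧ c < w}.Nonempty := ⟨w0, hw0C, hw0⟩
      have hmC : wf.min _ hB ∈ C := (wf.min_mem _ hB).1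
      have hmc : c < wf.min _ hB := (wf.min_mem _ hB).2
      have hmin : ∀ w ∈ C, c < w → wf.min _ hB ≤ w := by
        intro w hw hwc
        rcases eq_or_ne w (wf.min _ hB) with h | hne
        · exact le_of_eq h.symm
        · have hnr : ¬ r w (wf.min _ hB) := wf.not_lt_min {w | w ∈ C ∧ c < w} ⟨hw, hwc⟩
          rcases trichotomous_of r w (wf.min _ hB) with h | h | h
          · exact absurd h hnr
          · exact absurd h hne
          · exact le_of_lt (hw.2 _ (hCV hmC) h)
      obtain ⟨d, hdE, hcd, hdm⟩ :=
        dens c (hVS (hCV hcC)) _ (hVS (hCV hmC)) hmc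
      exact ⟨d, hdE, hcd, fun w hw hwc => lt_of_lt_of_le hdm (hmin w hw hwc)⟩
    have hC1 : #C1 ≤ θ := by
      refine le_trans ?_ hE
      choose f hfE hfle hfgt using fun c : ↥C1 => key c c.2
      refine Cardinal.mk_le_of_injective (f := fun c => (⟨f c, hfE c⟩ : ↥E)) ?_
      intro c c' hcc
      have hval : f c = f c' := congrArg Subtype.val hcc
      by_contra hne
      have hne' : (c : L) ≠ (c' : L) := fun h => hne (Subtype.ext h)
      rcases hne'.lt_or_gt with h | h
      · exact absurd hval (ne_of_lt (lt_of_lt_of_le (hfgt c _ c'.2.1 h) (hfle c')))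
      · exact absurd hval.symm (ne_of_lt (lt_of_lt_of_le (hfgt c' _ c.2.1 h) (hfle c)))
    set C0 : Set L := {x | x ∈ C ∧ ∀ w ∈ C, w ≤ x} with hC0def
    have hC0 : #C0 ≤ 1 := by
      rw [Cardinal.mk_le_one_iff_set_subsingleton]
      intro x hx y hy
      exact le_antisymm (hy.2 x hx.1) (hx.2 y hy.1)
    have hsub : C ⊆ C1 ∪ C0 := by
      intro c hc
      by_cases h : ∃ w ∈ C, c < w
      · exact Or.inl ⟨hc, h⟩
      · push_neg at h
        exact Or.inr ⟨hc, h⟩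
    calc #C ≤ #(C1 ∪ C0 : Set L) := Cardinal.mk_le_mk_of_subset hsub
      _ ≤ #C1 + #C0 := Cardinal.mk_union_le _ _
      _ ≤ θ + 1 := add_le_add hC1 hC0
      _ ≤ θ + θ := add_le_add_right (le_trans (le_of_lt Cardinal.one_lt_aleph0) hθ) _
      _ = θ := Cardinal.add_eq_self hθ
  have hcov : V ⊆ ⋃ c ∈ C, (V ∩ Set.Iic c) := by
    intro s hs
    obtain ⟨c, hcC, hcs⟩ := cofin s hs
    exact Set.mem_biUnion hcC ⟨hs, hcs⟩
  have hIic : ∀ c : L, c ∈ C → #(V ∩ Set.Iic c : Set L) ≤ θ := by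
    intro c hc
    have hsub : (V ∩ Set.Iic c : Set L) ⊆ insert c (V ∩ Set.Iio c : Set L) := by
      rintro x ⟨hxV, hxc⟩
      rcases eq_or_lt_of_le hxc with h | h
      · exact Or.inl h
      · exact Or.inr ⟨hxV, h⟩
    calc #(V ∩ Set.Iic c : Set L) ≤ #(insert c (V ∩ Set.Iio c) : Set L) :=
          Cardinal.mk_le_mk_of_subset hsub
      _ ≤ #(V ∩ Set.Iio c : Set L) + 1 := Cardinal.mk_insert_le
      _ ≤ θ + θ := add_le_add (h1 c (hCV hc))
          (le_trans (le_of_lt Cardinal.one_lt_aleph0) hθ)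
      _ = θ := Cardinal.add_eq_self hθ
  calc #V ≤ #(⋃ c ∈ C, (V ∩ Set.Iic c) : Set L) := Cardinal.mk_le_mk_of_subset hcov
    _ ≤ #C * ⨆ c : ↥C, #(V ∩ Set.Iic (c : L) : Set L) := Cardinal.mk_biUnion_le _ _
    _ ≤ θ * θ := mul_le_mul' hC (ciSup_le' fun c => hIic _ c.2)
    _ = θ := Cardinal.mul_eq_self hθ

/-- Key condensation lemma: a set of size `> θ` in an order with a `θ`-sized weakly dense
set (relative to `S`) contains an `ℵ₀`-dense subset. -/
lemma exists_dense_T (θ : Cardinal.{u}) (hθ : ℵ₀ ≤ θ) (E S : Set L) (hE : #E ≤ θ)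
    (densU : ∀ a ∈ S, ∀ b ∈ S, a < b → ∃ d ∈ E, a ≤ d ∧ d < b)
    (densD : ∀ a ∈ S, ∀ b ∈ S, a < b → ∃ d ∈ E, a < d ∧ d ≤ b)
    (hS : θ < #S) :
    ∃ T : Set L, T ⊆ S ∧ (∃ a ∈ T, ∃ b ∈ T, a < b) ∧
      ∀ a ∈ T, ∀ b ∈ T, a < b → ℵ₀ ≤ #(T ∩ Set.Ioo a b : Set L) := by
  classical
  set Vu : L → Set L := fun d => {s | s ∈ S ∧ s < d ∧ #(S ∩ Set.Ioo s d : Set L) ≤ θ} with hVu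
  set Vd : L → Set L := fun d => {s | s ∈ S ∧ d < s ∧ #(S ∩ Set.Ioo d s : Set L) ≤ θ} with hVd
  have hVuB : ∀ d : L, #(Vu d) ≤ θ := by
    intro d
    refine fin_bound_up θ hθ E S (Vu d) hE densD (fun x hx => hx.1) ?_
    intro v hv
    refine le_trans (Cardinal.mk_le_mk_of_subset ?_) hv.2.2
    rintro x ⟨⟨hxS, hxd, _⟩, hvx⟩
    exact ⟨hxS, hvx, hxd⟩
  have hVdB : ∀ d : L, #(Vd d) ≤ θ := by
    intro d
    refine fin_bound_down θ hθ E S (Vd d) hE densU (fun x hx => hx.1) ?_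
    intro v hv
    refine le_trans (Cardinal.mk_le_mk_of_subset ?_) hv.2.2
    rintro x ⟨⟨hxS, hxd, _⟩, hvx⟩
    exact ⟨hxS, hxd, hvx⟩
  set Bad : Set L := {s | s ∈ S ∧ ((∃ d ∈ E, s < d ∧ #(S ∩ Set.Ioo s d : Set L) ≤ θ) ∨
      (∃ d ∈ E, d < s ∧ #(S ∩ Set.Ioo d s : Set L) ≤ θ))} with hBadDef
  have hBad : #Bad ≤ θ := by
    have hsub : Bad ⊆ (⋃ d ∈ E, Vu d) ∪ (⋃ d ∈ E, Vd d) := by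
      rintro s ⟨hsS, h | h⟩
      · obtain ⟨d, hdE, h1, h2⟩ := h
        exact Or.inl (Set.mem_biUnion hdE ⟨hsS, h1, h2⟩)
      · obtain ⟨d, hdE, h1, h2⟩ := h
        exact Or.inr (Set.mem_biUnion hdE ⟨hsS, h1, h2⟩)
    have h1 : #(⋃ d ∈ E, Vu d : Set L) ≤ θ := by
      refine le_trans (Cardinal.mk_biUnion_le _ _) ?_
      refine le_trans (mul_le_mul' hE (ciSup_le' fun d => hVuB _)) ?_
      exact le_of_eq (Cardinal.mul_eq_self hθ)
    have h2 : #(⋃ d ∈ E, Vd d : Set L) ≤ θ := by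
      refine le_trans (Cardinal.mk_biUnion_le _ _) ?_
      refine le_trans (mul_le_mul' hE (ciSup_le' fun d => hVdB _)) ?_
      exact le_of_eq (Cardinal.mul_eq_self hθ)
    calc #Bad ≤ #((⋃ d ∈ E, Vu d) ∪ (⋃ d ∈ E, Vd d) : Set L) :=
          Cardinal.mk_le_mk_of_subset hsub
      _ ≤ _ + _ := Cardinal.mk_union_le _ _
      _ ≤ θ + θ := add_le_add h1 h2
      _ = θ := Cardinal.add_eq_self hθ
  set T : Set L := S \ Bad with hTdef
  have hTS : T ⊆ S := Set.diff_subset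
  have hT : θ < #T := by
    by_contra hc
    push_neg at hc
    have hsub : S ⊆ T ∪ Bad := by
      intro s hs
      by_cases h : s ∈ Bad
      · exact Or.inr h
      · exact Or.inl ⟨hs, h⟩
    have : #S ≤ θ := by
      calc #S ≤ #(T ∪ Bad : Set L) := Cardinal.mk_le_mk_of_subset hsub
        _ ≤ #T + #Bad := Cardinal.mk_union_le _ _
        _ ≤ θ + θ := add_le_add hc hBad
        _ = θ := Cardinal.add_eq_self hθ
    exact absurd hS (not_lt.2 this)
  have hbig : ∀ a ∈ T, ∀ b ∈ T, a < b → θ < #(S ∩ Set.Ioo a b : Set L) := by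
    intro a haT b hbT hab
    obtain ⟨d, hdE, had, hdb⟩ := densU a (hTS haT) b (hTS hbT) hab
    rcases eq_or_lt_of_le had with rfl | h
    · by_contra hc
      push_neg at hc
      exact hbT.2 ⟨hTS hbT, Or.inr ⟨a, hdE, hab, hc⟩⟩
    · by_contra hc
      push_neg at hc
      have hsmall : #(S ∩ Set.Ioo a d : Set L) ≤ θ := by
        refine le_trans (Cardinal.mk_le_mk_of_subset ?_) hc
        rintro x ⟨hxS, hx1, hx2⟩
        exact ⟨hxS, hx1, hx2.trans hdb⟩
      exact haT.2 ⟨hTS haT, Or.inl ⟨d, hdE, h, hsmall⟩⟩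
  refine ⟨T, hTS, ?_, ?_⟩
  · have h2 : (1 : Cardinal) < #T := lt_of_lt_of_le Cardinal.one_lt_aleph0 (hθ.trans hT.le)
    rw [Cardinal.one_lt_iff_nontrivial] at h2
    obtain ⟨x, y, hxy⟩ := h2
    have hxy' : (x : L) ≠ (y : L) := fun h => hxy (Subtype.ext h)
    rcases hxy'.lt_or_gt with h | h
    · exact ⟨x, x.2, y, y.2, h⟩
    · exact ⟨y, y.2, x, x.2, h⟩
  · intro a haT b hbT hab
    by_contra hc
    push_neg at hc
    have hsub : (S ∩ Set.Ioo a b : Set L) ⊆ (T ∩ Set.Ioo a b) ∪ Bad := by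
      rintro x ⟨hxS, hx⟩
      by_cases h : x ∈ Bad
      · exact Or.inr h
      · exact Or.inl ⟨⟨hxS, h⟩, hx⟩
    have : #(S ∩ Set.Ioo a b : Set L) ≤ θ := by
      calc #(S ∩ Set.Ioo a b : Set L) ≤ #((T ∩ Set.Ioo a b) ∪ Bad : Set L) :=
            Cardinal.mk_le_mk_of_subset hsub
        _ ≤ #(T ∩ Set.Ioo a b : Set L) + #Bad := Cardinal.mk_union_le _ _
        _ ≤ θ + θ := add_le_add (hc.le.trans hθ) hBad
        _ = θ := Cardinal.add_eq_self hθ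
    exact absurd (hbig a haT b hbT hab) (not_lt.2 this)

/-- From a subset with an `ℵ₀`-dense structure we get that the suborder is not scattered. -/
lemma not_kscat (G T : Set L) (hTG : T ⊆ G)
    (ex : ∃ a ∈ T, ∃ b ∈ T, a < b)
    (dens : ∀ a ∈ T, ∀ b ∈ T, a < b → ℵ₀ ≤ #(T ∩ Set.Ioo a b : Set L)) :
    ¬ KScattered ℵ₀ (↥G) := by
  intro h
  refine h {x : ↥G | (x : L) ∈ T} ⟨?_, ?_⟩
  · obtain ⟨a, haT, b, hbT, hab⟩ := ex
    refine ⟨⟨⟨a, hTG haT⟩, haT⟩, ⟨⟨b, hTG hbT⟩, hbT⟩, fun hcon => hab.ne ?_⟩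
    have h1 := Subtype.ext_iff.mp hcon
    exact Subtype.ext_iff.mp h1
  · rintro ⟨⟨a, haG⟩, haT⟩ ⟨⟨b, hbG⟩, hbT⟩ hab
    have hab' : a < b := hab
    refine le_trans (dens a haT b hbT hab') (Cardinal.mk_le_of_injective
      (f := fun x => ⟨⟨⟨(x : L), hTG x.2.1⟩, x.2.1⟩, x.2.2.1, x.2.2.2⟩) ?_)
    intro x y hxy
    have h1 := Subtype.ext_iff.mp hxy
    have h2 := Subtype.ext_iff.mp h1
    have h3 := Subtype.ext_iff.mp h2
    exact Subtype.ext h3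

/-- An order all of whose intervals are `< κ` is `κ`-scattered. -/
lemma kscat_of_small_intervals {P : Type u} [LinearOrder P] (κ : Cardinal.{u})
    (h : ∀ a b : P, #(Set.Ioo a b : Set P) < κ) : KScattered κ P := by
  rintro S ⟨hnt, hd⟩
  have key : ∀ x y : ↥S, x < y → False := by
    intro x y hxy
    have h1 := hd x y hxy
    have h2 : #{c : ↥S // x < c ∧ c < y} ≤ #(Set.Ioo (x : P) (y : P) : Set P) := by
      refine Cardinal.mk_le_of_injective
        (f := fun c => ⟨((c : ↥S) : P), c.2.1, c.2.2⟩) ?_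
      intro c c' hcc
      have h1 := Subtype.ext_iff.mp hcc
      exact Subtype.ext (Subtype.ext h1)
    exact absurd (h1.trans h2) (not_le.2 (h _ _))
  obtain ⟨x, y, hxy⟩ := hnt
  rcases hxy.lt_or_gt with h1 | h1
  · exact absurd h1 (fun h' => key x y h')
  · exact absurd h1 (fun h' => key y x h')

end Aux

section Fiber

variable (I : Type u) [LinearOrder I] [WellFoundedLT I]

/-- Eventually-constant functions: a weakly dense subset of `Lex (I → Bool)`. -/
def EvConst : Set (Lex (I → Bool)) :=
  {f | ∃ i : I, ∃ b : Bool, ∀ j : I, i < j → ofLex f j = b}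

lemma densU_fib : ∀ x y : Lex (I → Bool), x < y →
    ∃ d ∈ EvConst I, x ≤ d ∧ d < y := by
  intro x y hxy
  obtain ⟨i, hpre, hi⟩ := (hxy : Pi.Lex (· < ·) (@fun _ => (· < ·)) (ofLex x) (ofLex y))
  obtain ⟨hxi, hyi⟩ := Bool.lt_iff.1 hi
  set g : I → Bool := fun j => if j ≤ i then ofLex x j else true with hg
  refine ⟨toLex g, ⟨i, true, fun j hj => if_neg (not_le.2 hj)⟩, ?_, ?_⟩
  · rcases eq_or_ne (ofLex x) g with h | h
    · exact le_of_eq (congrArg toLex h)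
    · have hne : {j : I | ofLex x j ≠ g j}.Nonempty := by
        by_contra hcon
        push_neg at hcon
        exact h (funext fun j => not_ne_iff.1 fun hj => (hcon ▸ (Set.mem_setOf_eq ▸ hj :
          j ∈ {j : I | ofLex x j ≠ g j})).elim)
      have wf : WellFounded ((· < ·) : I → I → Prop) := IsWellFounded.wf
      set j0 := wf.min _ hne with hj0
      have hj0mem : ofLex x j0 ≠ g j0 := wf.min_mem _ hne
      have hj0i : ¬ j0 ≤ i := fun hle => hj0mem (by rw [hg]; simp [hle])
      have hlt : Pi.Lex (· < ·) (@fun _ => (· < ·)) (ofLex x) g := by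
        refine ⟨j0, fun j hj => not_ne_iff.1 (fun hj' => wf.not_lt_min _ hj' hj), ?_⟩
        have hgj0 : g j0 = true := if_neg hj0i
        have hxj0 : ofLex x j0 = false := by
          rw [hgj0] at hj0mem
          simpa using hj0mem
        rw [hgj0, hxj0]
        exact Bool.false_lt_true
      exact le_of_lt (hlt : x < toLex g)
  · refine ⟨i, fun j hj => ?_, ?_⟩
    · show g j = ofLex y j
      rw [hg]; simp only [if_pos hj.le]; exact hpre j hj
    · show g i < ofLex y i
      rw [hg]; simp only [if_pos le_rfl]; exact hi

lemma densD_fib : ∀ x y : Lex (I → Bool), x < y →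
    ∃ d ∈ EvConst I, x < d ∧ d ≤ y := by
  intro x y hxy
  obtain ⟨i, hpre, hi⟩ := (hxy : Pi.Lex (· < ·) (@fun _ => (· < ·)) (ofLex x) (ofLex y))
  set g : I → Bool := fun j => if j ≤ i then ofLex y j else false with hg
  refine ⟨toLex g, ⟨i, false, fun j hj => if_neg (not_le.2 hj)⟩, ?_, ?_⟩
  · refine (⟨i, fun j hj => ?_, ?_⟩ : Pi.Lex (· < ·) (@fun _ => (· < ·)) (ofLex x) g)
    · show ofLex x j = g j
      rw [hg]; simp only [if_pos hj.le]; exact (hpre j hj)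
    · show ofLex x i < g i
      rw [hg]; simp only [if_pos le_rfl]; exact hi
  · rcases eq_or_ne g (ofLex y) with h | h
    · exact le_of_eq (congrArg toLex h)
    · have hne : {j : I | g j ≠ ofLex y j}.Nonempty := by
        by_contra hcon
        push_neg at hcon
        exact h (funext fun j => not_ne_iff.1 fun hj => (hcon ▸ (Set.mem_setOf_eq ▸ hj :
          j ∈ {j : I | g j ≠ ofLex y j})).elim)
      have wf : WellFounded ((· < ·) : I → I → Prop) := IsWellFounded.wf
      set j0 := wf.min _ hne with hj0
      have hj0mem : g j0 ≠ ofLex y j0 := wf.min_mem _ hne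
      have hj0i : ¬ j0 ≤ i := fun hle => hj0mem (by rw [hg]; simp [hle])
      have hlt : Pi.Lex (· < ·) (@fun _ => (· < ·)) g (ofLex y) := by
        refine ⟨j0, fun j hj => not_ne_iff.1 (fun hj' => wf.not_lt_min _ hj' hj), ?_⟩
        have hgj0 : g j0 = false := if_neg hj0i
        have hyj0 : ofLex y j0 = true := by
          rw [hgj0] at hj0mem
          simpa using (Ne.symm hj0mem)
        rw [hgj0, hyj0]
        exact Bool.false_lt_true
      exact le_of_lt (hlt : toLex g < y)

lemma card_EvConst (θ : Cardinal.{u}) (hθ : ℵ₀ ≤ θ) (hI : #I ≤ θ)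
    (h2 : ∀ i : I, (2 : Cardinal.{u}) ^ #(Set.Iic i : Set I) ≤ θ) :
    #(EvConst I) ≤ θ := by
  classical
  have hsub : EvConst I ⊆ ⋃ i : I,
      {f : Lex (I → Bool) | ∃ b : Bool, ∀ j : I, i < j → ofLex f j = b} := by
    rintro f ⟨i, b, hb⟩
    exact Set.mem_iUnion.2 ⟨i, b, hb⟩
  refine le_trans (Cardinal.mk_le_mk_of_subset hsub) (le_trans (Cardinal.mk_iUnion_le _) ?_)
  have hbound : ∀ i : I,
      #({f : Lex (I → Bool) | ∃ b : Bool, ∀ j : I, i < j → ofLex f j = b} : Set _) ≤ θ := by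
    intro i
    have hinj : #({f : Lex (I → Bool) | ∃ b : Bool, ∀ j : I, i < j → ofLex f j = b} : Set _)
        ≤ #((((Set.Iic i : Set I)) → Bool) × Bool) := by
      choose bf hbf using fun f : ↥({f : Lex (I → Bool) |
        ∃ b : Bool, ∀ j : I, i < j → ofLex f j = b} : Set _) => f.2
      refine Cardinal.mk_le_of_injective
        (f := fun f => ((fun j => ofLex f.1 j.1), bf f)) ?_
      intro f f' hff
      have h1 : (fun j : ↥(Set.Iic i) => ofLex f.1 j.1) =
          (fun j : ↥(Set.Iic i) => ofLex f'.1 j.1) := congrArg Prod.fst hff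
      have h2' : bf f = bf f' := congrArg Prod.snd hff
      apply Subtype.ext
      have : ofLex f.1 = ofLex f'.1 := by
        funext j
        rcases le_or_gt j i with hle | hlt
        · exact congrFun h1 ⟨j, hle⟩
        · rw [hbf f j hlt, hbf f' j hlt, h2']
      exact this
    refine le_trans hinj ?_
    have hcard : #((((Set.Iic i : Set I)) → Bool) × Bool) =
        (2 : Cardinal.{u}) ^ #(Set.Iic i : Set I) * 2 := by
      rw [Cardinal.mk_prod, Cardinal.lift_uzero, Cardinal.mk_arrow, Cardinal.lift_uzero,
        Cardinal.mk_bool, Cardinal.lift_two]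
    rw [hcard]
    calc (2 : Cardinal.{u}) ^ #(Set.Iic i : Set I) * 2 ≤ θ * θ :=
          mul_le_mul' (h2 i) (le_trans two_lt_aleph0'.le hθ)
      _ = θ := Cardinal.mul_eq_self hθ
  exact le_trans (mul_le_mul' hI (ciSup_le' fun i => hbound _)) (le_of_eq (Cardinal.mul_eq_self hθ))

end Fiber

section Construction

/-- The least cardinal `l` with `2 ^ ν < 2 ^ l`. -/
noncomputable def lamC (ν : Cardinal.{u}) : Cardinal.{u} :=
  sInf {l : Cardinal.{u} | (2 : Cardinal.{u}) ^ ν < (2 : Cardinal.{u}) ^ l}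

lemma lamC_spec (ν : Cardinal.{u}) :
    (2 : Cardinal.{u}) ^ ν < (2 : Cardinal.{u}) ^ lamC ν :=
  csInf_mem (s := {l : Cardinal.{u} | (2 : Cardinal.{u}) ^ ν < (2 : Cardinal.{u}) ^ l})
    ⟨(2 : Cardinal.{u}) ^ ν, Cardinal.cantor _⟩

lemma lamC_min {ν μ : Cardinal.{u}} (h : μ < lamC ν) :
    (2 : Cardinal.{u}) ^ μ ≤ (2 : Cardinal.{u}) ^ ν := by
  by_contra hc
  push_neg at hc
  exact absurd (csInf_le' (show μ ∈ {l : Cardinal.{u} |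
    (2 : Cardinal.{u}) ^ ν < (2 : Cardinal.{u}) ^ l} from hc)) (not_le.2 h)

lemma lamC_le (ν : Cardinal.{u}) : lamC ν ≤ (2 : Cardinal.{u}) ^ ν :=
  csInf_le' (show ((2 : Cardinal.{u}) ^ ν) ∈ {l : Cardinal.{u} |
    (2 : Cardinal.{u}) ^ ν < (2 : Cardinal.{u}) ^ l} from Cardinal.cantor _)

lemma lamC_inf {ν : Cardinal.{u}} (hν : ℵ₀ ≤ ν) : ℵ₀ ≤ lamC ν := by
  by_contra h
  push_neg at h
  have h1 : (2 : Cardinal.{u}) ^ lamC ν < ℵ₀ :=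
    Cardinal.power_lt_aleph0 two_lt_aleph0' h
  have h2 : ℵ₀ ≤ (2 : Cardinal.{u}) ^ ν := hν.trans ((Cardinal.cantor ν).le)
  exact absurd (lamC_spec ν) (not_lt.2 (h1.le.trans h2))

variable (κ : Cardinal.{u})

/-- Index type: a well order of type `κ.ord`. -/
abbrev Idx : Type u := κ.ord.ToType

/-- Cardinality of the initial segment below `i`. -/
noncomputable def nuAt (i : Idx κ) : Cardinal.{u} := #(Set.Iio i : Set (Idx κ))

/-- Index of the `i`-th fiber. -/
abbrev FibI (i : Idx κ) : Type u := (lamC (nuAt κ i)).ord.ToType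

/-- The `i`-th fiber: the generalized Cantor cube `2 ^ (lamC (nuAt i))`, ordered
lexicographically. -/
abbrev Fib (i : Idx κ) : Type u := Lex (FibI κ i → Bool)

/-- The big order: lexicographic sum of the fibers along `Idx κ`. -/
abbrev PBig : Type u := Σₗ i : Idx κ, Fib κ i

lemma exists_nuAt (κ ν : Cardinal.{u}) (h : ν < κ) : ∃ i : Idx κ, nuAt κ i = ν := by
  haveI iwo : IsWellOrder κ.ord.ToType (· < ·) := isWellOrder_lt
  have h3 : @Ordinal.type κ.ord.ToType (· < ·) iwo = κ.ord := Ordinal.type_toType κ.ord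
  have h2 : ν.ord < @Ordinal.type κ.ord.ToType (· < ·) iwo :=
    (Cardinal.lt_ord.2 (by rwa [Cardinal.card_ord])).trans_eq h3.symm
  refine ⟨@Ordinal.enum κ.ord.ToType (· < ·) iwo ⟨ν.ord, h2⟩, ?_⟩
  have h4 : @Ordinal.typein κ.ord.ToType (· < ·) iwo
      (@Ordinal.enum κ.ord.ToType (· < ·) iwo ⟨ν.ord, h2⟩) = ν.ord :=
    Ordinal.typein_enum _ _
  have h5 := @Ordinal.card_typein κ.ord.ToType (· < ·) iwo
    (@Ordinal.enum κ.ord.ToType (· < ·) iwo ⟨ν.ord, h2⟩)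
  rw [h4, Cardinal.card_ord] at h5
  exact h5.symm

lemma mk_toType' (o : Ordinal.{u}) : #o.ToType = o.card := Cardinal.mk_toType o

lemma fib_card (i : Idx κ) : #(Fib κ i) = 2 ^ lamC (nuAt κ i) := by
  have h1 : #(FibI κ i) = lamC (nuAt κ i) := by
    rw [mk_toType', Cardinal.card_ord]
  calc #(Fib κ i) = #(FibI κ i → Bool) := Cardinal.mk_congr (toLex (α := FibI κ i → Bool)).symm
    _ = (2 : Cardinal.{u}) ^ #(FibI κ i) := by
        rw [Cardinal.mk_arrow, Cardinal.mk_bool, Cardinal.lift_two, Cardinal.lift_uzero]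
    _ = _ := by rw [h1]

end Construction

/-- Suppose `κ` is a strongly inaccessible cardinal.  Then there is a
`κ`-scattered linear order that is not `(ℵ₀, κ)`-scattered, i.e., it is not a union of
fewer than `κ` scattered suborders. -/
theorem stmt5 (κ : Cardinal.{u}) (hκ : κ.IsInaccessible) :
    ∃ (P : Type u) (_ : LinearOrder P), KScattered κ P ∧
      ¬ ∃ (ι : Type u) (F : ι → Set P), #ι < κ ∧ (∀ i, KScattered ℵ₀ (F i)) ∧
        (⋃ i, F i) = Set.univ := by
  classical
  obtain ⟨hℵ, hreg, hsl⟩ := hκ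
  have hκ0 : ℵ₀ ≤ κ := hℵ.le
  have hfib_lt : ∀ i : Idx κ, #(Fib κ i) < κ := by
    intro i
    rw [fib_card]
    have hν : nuAt κ i < κ := Cardinal.mk_Iio_ord_toType i
    exact hsl (lt_of_le_of_lt (lamC_le _) (hsl hν))
  have hIic_lt : ∀ i : Idx κ, #(Set.Iic i : Set (Idx κ)) < κ := by
    intro i
    have h1 : #(Set.Iio i : Set (Idx κ)) < κ := Cardinal.mk_Iio_ord_toType i
    rw [show (Set.Iic i : Set (Idx κ)) = insert i (Set.Iio i) from (Set.Iio_insert).symm]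
    exact lt_of_le_of_lt Cardinal.mk_insert_le
      (Cardinal.add_lt_of_lt hκ0 h1 (lt_of_lt_of_le Cardinal.one_lt_aleph0 hκ0))
  have hint : ∀ a b : PBig κ, #(Set.Ioo a b : Set (PBig κ)) < κ := by
    intro a b
    have hmem : ∀ x : ↥(Set.Ioo a b : Set (PBig κ)),
        (ofLex (x : PBig κ)).1 ∈ Set.Iic ((ofLex b).1) := by
      intro x
      rcases Sigma.Lex.lt_def.1 x.2.2 with h | ⟨h, _⟩
      · exact le_of_lt h
      · exact le_of_eq h
    have hinj : #(Set.Ioo a b : Set (PBig κ)) ≤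
        #(Σ j : ↥(Set.Iic ((ofLex b).1) : Set (Idx κ)), Fib κ (j : Idx κ)) := by
      refine Cardinal.mk_le_of_injective (f := fun x =>
        ⟨⟨(ofLex (x : PBig κ)).1, hmem x⟩, (ofLex (x : PBig κ)).2⟩) ?_
      intro x y hxy
      have h0 := Sigma.mk.inj_iff.mp hxy
      have h1 : ((ofLex (x : PBig κ)).1) = ((ofLex (y : PBig κ)).1) :=
        congrArg Subtype.val h0.1
      have h2 : HEq (ofLex (x : PBig κ)).2 (ofLex (y : PBig κ)).2 := by
        refine Sigma.mk.inj_iff.mp ?_ |>.2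
        exact (congrArg (fun p : (Σ j : ↥(Set.Iic ((ofLex b).1) : Set (Idx κ)),
          Fib κ (j : Idx κ)) => (⟨((p.1 : Idx κ)), p.2⟩ : Σ j : Idx κ, Fib κ j)) hxy)
      apply Subtype.ext
      show (x : PBig κ) = (y : PBig κ)
      exact congrArg toLex (Sigma.ext h1 h2)
    calc #(Set.Ioo a b : Set (PBig κ))
        ≤ #(Σ j : ↥(Set.Iic ((ofLex b).1) : Set (Idx κ)), Fib κ (j : Idx κ)) := hinj
      _ = Cardinal.sum (fun j : ↥(Set.Iic ((ofLex b).1) : Set (Idx κ)) =>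
          #(Fib κ (j : Idx κ))) := Cardinal.mk_sigma _
      _ < κ := Cardinal.sum_lt_of_isRegular ⟨hκ0, hreg⟩ (hIic_lt _) (fun j => hfib_lt _)
  refine ⟨PBig κ, inferInstance, kscat_of_small_intervals κ hint, ?_⟩
  rintro ⟨ιF, F, hcard, hscat, hcover⟩
  set ν : Cardinal.{u} := #ιF + ℵ₀ with hν
  have hνinf : ℵ₀ ≤ ν := le_add_self
  have hνκ : ν < κ := Cardinal.add_lt_of_lt hκ0 hcard hℵ
  obtain ⟨i₀, hnu⟩ := exists_nuAt κ ν hνκ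
  set θ : Cardinal.{u} := (2 : Cardinal.{u}) ^ ν with hθdef
  have hθinf : ℵ₀ ≤ θ := hνinf.trans (Cardinal.cantor ν).le
  set e : Fib κ i₀ → PBig κ := fun x => toLex ⟨i₀, x⟩ with he
  have hemono : StrictMono e := fun x y hxy => Sigma.Lex.lt_def.2 (Or.inr ⟨rfl, hxy⟩)
  have heinj : Function.Injective e := hemono.injective
  have hrange : #(Set.range e) = (2 : Cardinal.{u}) ^ lamC ν := by
    rw [Cardinal.mk_range_eq _ heinj, fib_card, hnu]
  have hexists : ∃ i1 : ιF, θ < #(F i1 ∩ Set.range e : Set (PBig κ)) := by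
    by_contra hcon
    push_neg at hcon
    have hcov2 : Set.range e ⊆ ⋃ i1 : ιF, (F i1 ∩ Set.range e) := by
      intro x hx
      have hx2 : x ∈ ⋃ i1, F i1 := hcover ▸ Set.mem_univ x
      obtain ⟨s, ⟨i1, rfl⟩, hs⟩ := hx2
      exact Set.mem_iUnion.2 ⟨i1, hs, hx⟩
    have hle : #(Set.range e) ≤ θ := by
      calc #(Set.range e) ≤ #(⋃ i1 : ιF, (F i1 ∩ Set.range e) : Set (PBig κ)) :=
            Cardinal.mk_le_mk_of_subset hcov2
        _ ≤ #ιF * ⨆ i1 : ιF, #(F i1 ∩ Set.range e : Set (PBig κ)) := Cardinal.mk_iUnion_le _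
        _ ≤ θ * θ := mul_le_mul' (le_trans le_self_add (Cardinal.cantor ν).le)
            (ciSup_le' fun i1 => hcon i1)
        _ = θ := Cardinal.mul_eq_self hθinf
    rw [hrange] at hle
    exact absurd (lamC_spec ν) (not_lt.2 hle)
  obtain ⟨i1, hbig⟩ := hexists
  set EP : Set (PBig κ) := e '' (EvConst (FibI κ i₀)) with hEP
  have hfibI : #(FibI κ i₀) = lamC ν := by
    rw [mk_toType', Cardinal.card_ord, hnu]
  have hEcard : #(EvConst (FibI κ i₀)) ≤ θ := by
    refine card_EvConst _ θ hθinf ?_ ?_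
    · rw [hfibI]; exact lamC_le ν
    · intro i
      have hIio : #(Set.Iio i : Set (FibI κ i₀)) < lamC ν :=
        lt_of_lt_of_le (Cardinal.mk_Iio_ord_toType i) (le_of_eq (congrArg lamC hnu))
      have h1 : #(Set.Iic i : Set (FibI κ i₀)) < lamC ν := by
        rw [show (Set.Iic i : Set (FibI κ i₀)) = insert i (Set.Iio i) from
          (Set.Iio_insert).symm]
        exact lt_of_le_of_lt Cardinal.mk_insert_le
          (Cardinal.add_lt_of_lt (lamC_inf hνinf) hIio
            (lt_of_lt_of_le Cardinal.one_lt_aleph0 (lamC_inf hνinf)))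
      exact lamC_min h1
  have hEPcard : #EP ≤ θ := le_trans Cardinal.mk_image_le hEcard
  set S : Set (PBig κ) := F i1 ∩ Set.range e with hSdef
  have densU : ∀ a ∈ S, ∀ b ∈ S, a < b → ∃ d ∈ EP, a ≤ d ∧ d < b := by
    intro a ha b hb hab
    obtain ⟨za, hza⟩ := ha.2
    obtain ⟨zb, hzb⟩ := hb.2
    have hz : za < zb := by
      rw [← hza, ← hzb] at hab
      exact hemono.lt_iff_lt.1 hab
    obtain ⟨d, hdE, h1, h2⟩ := densU_fib (FibI κ i₀) za zb hz
    refine ⟨e d, Set.mem_image_of_mem _ hdE, ?_, ?_⟩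
    · rw [← hza]; exact hemono.le_iff_le.2 h1
    · rw [← hzb]; exact hemono h2
  have densD : ∀ a ∈ S, ∀ b ∈ S, a < b → ∃ d ∈ EP, a < d ∧ d ≤ b := by
    intro a ha b hb hab
    obtain ⟨za, hza⟩ := ha.2
    obtain ⟨zb, hzb⟩ := hb.2
    have hz : za < zb := by
      rw [← hza, ← hzb] at hab
      exact hemono.lt_iff_lt.1 hab
    obtain ⟨d, hdE, h1, h2⟩ := densD_fib (FibI κ i₀) za zb hz
    refine ⟨e d, Set.mem_image_of_mem _ hdE, ?_, ?_⟩
    · rw [← hza]; exact hemono h1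
    · rw [← hzb]; exact hemono.le_iff_le.2 h2
  obtain ⟨T, hTS, hex, hdens⟩ := exists_dense_T θ hθinf EP S hEPcard densU densD hbig
  exact not_kscat (F i1) T (hTS.trans Set.inter_subset_left) hex hdens (hscat i1)
end

section
/- For every linear order P and every cardinal ν, the lexicographic power ^ν P satisfies ^ν P → (P)¹_ν: every coloring of ^ν P in ν colors admits a monochromatic suborder order-isomorphic to P. -/
open Cardinal

universe u

section Aux
open scoped Classical

variable {T : Type u} [LinearOrder T] [WellFoundedLT T]
variable {P : Type u} [LinearOrder P]

/-- `stmt9Pred g γ s p` says: every `x` that agrees with the partial function `s` below `γ`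
and takes value `p` at `γ` has color different from `γ`. -/
def stmt9Pred (g : Lex (T → P) → T) (γ : T) (s : ∀ β, β < γ → P) (p : P) : Prop :=
  ∀ x : Lex (T → P), (∀ β (h : β < γ), ofLex x β = s β h) → ofLex x γ = p → g x ≠ γ

/-- The diagonal function, defined by well-founded recursion. -/
noncomputable def stmt9F [Nonempty P] (g : Lex (T → P) → T) : T → P :=
  (wellFounded_lt (α := T)).fix fun γ ih =>
    if h : ∃ p, stmt9Pred g γ ih p then h.choose else Classical.arbitrary P

lemma stmt9F_eq [Nonempty P] (g : Lex (T → P) → T) (γ : T) :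
    stmt9F g γ =
      if h : ∃ p, stmt9Pred g γ (fun β _ => stmt9F g β) p then h.choose
      else Classical.arbitrary P := by
  rw [stmt9F, WellFounded.fix_eq]

lemma stmt9_key [Nonempty P] (g : Lex (T → P) → T) :
    ∃ γ, ¬ ∃ p, stmt9Pred g γ (fun β _ => stmt9F g β) p := by
  by_contra hc
  push_neg at hc
  set f : Lex (T → P) := toLex (stmt9F g) with hf
  set γ := g f with hγ
  have h1 : ∃ p, stmt9Pred g γ (fun β _ => stmt9F g β) p := hc γ
  have h2 : stmt9F g γ = h1.choose := by
    rw [stmt9F_eq, dif_pos h1]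
  have := h1.choose_spec f (fun β _ => rfl) h2
  exact this rfl

end Aux

/-- For every linear order `P` and every cardinal `ν`, the lexicographic
power `^ν P` satisfies `^ν P → (P)¹_ν`: every coloring of `^ν P` in `ν` colors admits a
monochromatic suborder order-isomorphic to `P`.  Here `ν` is represented by its initial
ordinal's canonical well-ordered type `ν.ord.toType`, and `^ν P` is the set of functions
`ν → P` compared at the least coordinate of difference, i.e. `Lex (ν.ord.toType → P)`. -/
theorem stmt9 (P : Type u) [LinearOrder P] (ν : Cardinal.{u})
    (g : Lex (ν.ord.ToType → P) → ν.ord.ToType) :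
    ∃ S : Set (Lex (ν.ord.ToType → P)), Nonempty (P ≃o S) ∧
      ∀ x ∈ S, ∀ y ∈ S, g x = g y := by
  rcases isEmpty_or_nonempty ν.ord.ToType with hT | hT
  · exact (hT.false (g (toLex fun x => isEmptyElim x))).elim
  rcases isEmpty_or_nonempty P with hP | hP
  · refine ⟨∅, ⟨⟨Equiv.equivOfIsEmpty _ _, ?_⟩⟩, by simp⟩
    intro a
    exact isEmptyElim a
  obtain ⟨γ, hγ⟩ := stmt9_key g
  push_neg at hγ
  have h' : ∀ p : P, ∃ x : Lex (ν.ord.ToType → P),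
      (∀ β (h : β < γ), ofLex x β = stmt9F g β) ∧ ofLex x γ = p ∧ g x = γ := by
    intro p
    have h1 := hγ p
    unfold stmt9Pred at h1
    push_neg at h1
    exact h1
  choose x hx1 hx2 hx3 using h'
  have hsm : StrictMono x := by
    intro p q hpq
    refine ⟨γ, fun β hβ => ?_, ?_⟩
    · exact (hx1 p β hβ).trans (hx1 q β hβ).symm
    · show ofLex (x p) γ < ofLex (x q) γ
      rw [hx2 p, hx2 q]
      exact hpq
  refine ⟨Set.range x, ⟨hsm.orderIso x⟩, ?_⟩
  rintro _ ⟨p, rfl⟩ _ ⟨q, rfl⟩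
  rw [hx3 p, hx3 q]
end

section
/- Suppose β is an ordinal, κ is an infinite regular cardinal, and for each α < β, P_α is a κ-scattered linear order with a designated element 0_α. Then the finite-support anti-lexicographic sum Q = ⊕'_{α<β} P_α is κ-scattered. -/
open Cardinal Ordinal

universe u

/-- Suppose `β` is an ordinal, `κ` is an infinite regular cardinal, and for
each `α < β`, `P_α` is a `κ`-scattered linear order with a designated element `0_α = z α`.
Then the finite-support anti-lexicographic sum `Q = ⊕'_{α<β} P_α` — the linear order on
the set of finite-support functions `f` (i.e. `f α = z α` for all but finitely many `α`)
in which `f < g` iff `f Δ' < g Δ'` where `Δ'` is the largest coordinate of difference —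
is `κ`-scattered. -/
theorem stmt18 (κ : Cardinal.{u}) (hκ : κ.IsRegular) (β : Ordinal.{u})
    (P : β.ToType → Type u) [∀ α, LinearOrder (P α)] (z : ∀ α, P α)
    (hP : ∀ α, KScattered κ (P α))
    (lo : LinearOrder {f : ∀ α, P α // {α | f α ≠ z α}.Finite})
    (hlo : ∀ f g : {f : ∀ α, P α // {α | f α ≠ z α}.Finite},
      lo.lt f g ↔ ∃ m : β.ToType, (∀ α, m < α → f.1 α = g.1 α) ∧ f.1 m < g.1 m) :
    KScattered κ {f : ∀ α, P α // {α | f α ≠ z α}.Finite} := by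
  intro S hS
  obtain ⟨hnt, hdense⟩ := hS
  have htri : ∀ f g : {f : ∀ α, P α // {α | f α ≠ z α}.Finite},
      f ≠ g → lo.lt f g ∨ lo.lt g f := by
    intro f g hfg
    exact @lt_or_gt_of_ne _ lo f g hfg
  have hasymm : ∀ f g : {f : ∀ α, P α // {α | f α ≠ z α}.Finite},
      lo.lt f g → lo.lt g f → False := by
    intro f g h h'
    exact @lt_asymm _ lo.toPreorder f g h h' 
  -- the set of "difference coordinates" of pairs from S
  set D : Set β.ToType :=
    {m | ∃ f g : {f : ∀ α, P α // {α | f α ≠ z α}.Finite},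
      f ∈ S ∧ g ∈ S ∧ (∀ α, m < α → f.1 α = g.1 α) ∧ f.1 m < g.1 m} with hD
  have hDne : D.Nonempty := by
    obtain ⟨x, y, hxy⟩ := hnt
    have hxy' : x.1 ≠ y.1 := fun h => hxy (Subtype.ext h)
    rcases htri x.1 y.1 hxy' with h | h
    · obtain ⟨m, h1, h2⟩ := (hlo _ _).1 h
      exact ⟨m, x.1, y.1, x.2, y.2, h1, h2⟩
    · obtain ⟨m, h1, h2⟩ := (hlo _ _).1 h
      exact ⟨m, y.1, x.1, y.2, x.2, h1, h2⟩
  have hwf : WellFounded ((· < ·) : β.ToType → β.ToType → Prop) := wellFounded_lt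
  set m : β.ToType := hwf.min D hDne with hm
  have hmD : m ∈ D := hwf.min_mem D hDne
  have hmin : ∀ m' ∈ D, ¬ m' < m := fun m' h => hwf.not_lt_min D h
  obtain ⟨a, b, haS, hbS, hab_above, hab_m⟩ := hmD
  have hab : lo.lt a b := (hlo a b).2 ⟨m, hab_above, hab_m⟩
  -- elements strictly between a and b agree with a above m
  have lemA : ∀ f : {f : ∀ α, P α // {α | f α ≠ z α}.Finite},
      lo.lt a f → lo.lt f b → ∀ α, m < α → f.1 α = a.1 α := by
    intro f haf hfb
    obtain ⟨m1, h1, h2⟩ := (hlo a f).1 haf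
    have hm1 : m1 ≤ m := by
      by_contra hc
      push_neg at hc
      have hbf : lo.lt b f := by
        refine (hlo b f).2 ⟨m1, fun α hα => ?_, ?_⟩
        · rw [← hab_above α (hc.trans hα), h1 α hα]
        · rw [← hab_above m1 hc]; exact h2
      exact hasymm f b hfb hbf
    intro α hα
    exact (h1 α (lt_of_le_of_lt hm1 hα)).symm
  -- strict monotonicity at coordinate m, for elements of S strictly between a and b
  have lemB : ∀ f g : {f : ∀ α, P α // {α | f α ≠ z α}.Finite},
      f ∈ S → g ∈ S → lo.lt a f → lo.lt f b → lo.lt a g → lo.lt g b →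
      lo.lt f g → f.1 m < g.1 m := by
    intro f g hfS hgS haf hfb hag hgb hfg
    obtain ⟨m3, h1, h2⟩ := (hlo f g).1 hfg
    have hm3D : m3 ∈ D := ⟨f, g, hfS, hgS, h1, h2⟩
    have h3 : m ≤ m3 := not_lt.1 fun h => hmin m3 hm3D h
    rcases eq_or_lt_of_le h3 with h | h
    · rw [← h] at h2; exact h2
    · exfalso
      have := (lemA f haf hfb m3 h).trans (lemA g hag hgb m3 h).symm
      exact absurd this (ne_of_lt h2)
  -- agreement above m
  have lemC : ∀ f g : {f : ∀ α, P α // {α | f α ≠ z α}.Finite},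
      lo.lt a f → lo.lt f b → lo.lt a g → lo.lt g b →
      ∀ α, m < α → f.1 α = g.1 α := by
    intro f g haf hfb hag hgb α hα
    rw [lemA f haf hfb α hα, lemA g hag hgb α hα]
  -- comparison from coordinate m
  have lemD : ∀ f g : {f : ∀ α, P α // {α | f α ≠ z α}.Finite},
      lo.lt a f → lo.lt f b → lo.lt a g → lo.lt g b →
      f.1 m < g.1 m → lo.lt f g := by
    intro f g haf hfb hag hgb h
    exact (hlo f g).2 ⟨m, lemC f g haf hfb hag hgb, h⟩
  -- the projected suborder of P m
  set T : Set (P m) := {e | ∃ f : {f : ∀ α, P α // {α | f α ≠ z α}.Finite},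
    f ∈ S ∧ lo.lt a f ∧ lo.lt f b ∧ f.1 m = e} with hT
  refine hP m T ⟨?_, ?_⟩
  · -- Nontrivial T
    have hdab := hdense ⟨a, haS⟩ ⟨b, hbS⟩ hab
    have hκ2 := lt_of_lt_of_le (lt_of_lt_of_le one_lt_aleph0 hκ.aleph0_le) hdab
    obtain ⟨x, y, hxy⟩ := Cardinal.one_lt_iff_nontrivial.1 hκ2
    have hx1 : lo.lt a x.1.1 := x.2.1
    have hx2 : lo.lt x.1.1 b := x.2.2
    have hy1 : lo.lt a y.1.1 := y.2.1
    have hy2 : lo.lt y.1.1 b := y.2.2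
    have hne : x.1.1 ≠ y.1.1 := by
      intro h
      exact hxy (Subtype.ext (Subtype.ext h))
    have hmne : x.1.1.1 m ≠ y.1.1.1 m := by
      rcases htri x.1.1 y.1.1 hne with h | h
      · exact ne_of_lt (lemB _ _ x.1.2 y.1.2 hx1 hx2 hy1 hy2 h)
      · exact (ne_of_lt (lemB _ _ y.1.2 x.1.2 hy1 hy2 hx1 hx2 h)).symm
    exact ⟨⟨_, ⟨x.1.1, x.1.2, hx1, hx2, rfl⟩⟩, ⟨_, ⟨y.1.1, y.1.2, hy1, hy2, rfl⟩⟩,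
      fun h => hmne (congrArg Subtype.val h)⟩
  · -- density
    rintro ⟨c, f, hfS, haf, hfb, rfl⟩ ⟨d, g, hgS, hag, hgb, rfl⟩ hcd
    have hcd' : f.1 m < g.1 m := hcd
    have hfg : lo.lt f g := lemD f g haf hfb hag hgb hcd'
    refine le_trans (hdense ⟨f, hfS⟩ ⟨g, hgS⟩ hfg)
      (Cardinal.mk_le_of_injective (f := ?_) ?_)
    · rintro ⟨⟨h, hhS⟩, hfh, hhg⟩
      have hfh' : lo.lt f h := hfh
      have hhg' : lo.lt h g := hhg
      have hah : lo.lt a h := @lt_trans _ lo.toPreorder _ _ _ haf hfh'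
      have hhb : lo.lt h b := @lt_trans _ lo.toPreorder _ _ _ hhg' hgb
      exact ⟨⟨h.1 m, h, hhS, hah, hhb, rfl⟩,
        lemB f h hfS hhS haf hfb hah hhb hfh',
        lemB h g hhS hgS hah hhb hag hgb hhg'⟩
    · rintro ⟨⟨h1, hh1S⟩, hfh1, hh1g⟩ ⟨⟨h2, hh2S⟩, hfh2, hh2g⟩ heq
      have hfh1' : lo.lt f h1 := hfh1
      have hh1g' : lo.lt h1 g := hh1g
      have hfh2' : lo.lt f h2 := hfh2
      have hh2g' : lo.lt h2 g := hh2g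
      have hm12 : h1.1 m = h2.1 m := congrArg (fun x => (x.1 : P m)) heq
      have hval : h1 = h2 := by
        by_contra hne
        rcases htri h1 h2 hne with h | h
        · exact absurd hm12 (ne_of_lt (lemB h1 h2 hh1S hh2S
            (@lt_trans _ lo.toPreorder _ _ _ haf hfh1') (@lt_trans _ lo.toPreorder _ _ _ hh1g' hgb)
            (@lt_trans _ lo.toPreorder _ _ _ haf hfh2') (@lt_trans _ lo.toPreorder _ _ _ hh2g' hgb) h))
        · exact absurd hm12.symm (ne_of_lt (lemB h2 h1 hh2S hh1S
            (@lt_trans _ lo.toPreorder _ _ _ haf hfh2') (@lt_trans _ lo.toPreorder _ _ _ hh2g' hgb)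
            (@lt_trans _ lo.toPreorder _ _ _ haf hfh1') (@lt_trans _ lo.toPreorder _ _ _ hh1g' hgb) h))
      subst hval
      rfl
end
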